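/- arXiv:2210.11212 — 5 statements merged into one kernel-verified Lean document; each statement's English description precedes it below -/
import Mathlib

section
/- Let T > 0, κ > 2, a > 0 and b > 0. Suppose V : ℝ → ℝ is continuous on [0, ∞), V t ≥ 0 for all t ≥ 0, and for every t ≥ 0 with t ≠ T, V is differentiable at t with V'(t) ≤ −a·V(t) − b·μ_T(t)·V(t). Then V(t) ≤ ((T − t)/T)^(κ·b) · exp(−a·t) · V(0) for all t ∈ [0, T), and V(t) = 0 for all t ≥ T. -/
/-- Time-varying gain: `μ_T(t) = κ/(T − t)` for `0 ≤ t < T`, `0` otherwise. -/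
noncomputable def gain (κ T t : ℝ) : ℝ := if 0 ≤ t ∧ t < T then κ / (T - t) else 0

theorem prescribed_time_lyapunov (T κ a b : ℝ) (hT : 0 < T) (hκ : 2 < κ)
    (ha : 0 < a) (hb : 0 < b)
    (V : ℝ → ℝ) (hVc : ContinuousOn V (Set.Ici (0 : ℝ)))
    (hVnn : ∀ t : ℝ, 0 ≤ t → 0 ≤ V t)
    (hV' : ∀ t : ℝ, 0 ≤ t → t ≠ T →
      ∃ v : ℝ, HasDerivAt V v t ∧ v ≤ -a * V t - b * gain κ T t * V t) :
    (∀ t : ℝ, 0 ≤ t → t < T →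
      V t ≤ ((T - t) / T) ^ (κ * b) * Real.exp (-a * t) * V 0) ∧
    (∀ t : ℝ, T ≤ t → V t = 0) := by
  have hκ0 : (0:ℝ) < κ := by linarith
  set c := κ * b with hcdef
  have hc0 : 0 < c := mul_pos hκ0 hb
  set u : ℝ → ℝ := fun x => (T - x) / T with hu
  set h : ℝ → ℝ := fun x => u x ^ (-c) * Real.exp (a * x) with hh
  set F : ℝ → ℝ := fun x => V x * h x with hF
  have hupos : ∀ x : ℝ, x < T → 0 < u x := by
    intro x hx
    exact div_pos (by linarith) hT
  have hhpos : ∀ x : ℝ, x < T → 0 < h x :=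
    fun x hx => mul_pos (Real.rpow_pos_of_pos (hupos x hx) _) (Real.exp_pos _)
  -- derivative of h on [0, T)
  have hhder : ∀ x : ℝ, x < T → HasDerivAt h ((c / (T - x) + a) * h x) x := by
    intro x hx
    have hTx : 0 < T - x := by linarith
    have hu' : HasDerivAt u (-1 / T) x := by
      have : HasDerivAt (fun y : ℝ => T - y) (-1) x := by
        simpa using (hasDerivAt_id x).const_sub T
      simpa [hu] using this.div_const T
    have h1 : HasDerivAt (fun y => u y ^ (-c)) ((-1 / T) * (-c) * u x ^ (-c - 1)) x :=
      hu'.rpow_const (Or.inl (ne_of_gt (hupos x hx)))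
    have h2 : HasDerivAt (fun y => Real.exp (a * y)) (a * Real.exp (a * x)) x := by
      have : HasDerivAt (fun y : ℝ => a * y) a x := by
        simpa using (hasDerivAt_id x).const_mul a
      simpa [mul_comm] using this.exp
    have h3 := h1.mul h2
    have key : u x ^ (-c - 1) = u x ^ (-c) * (T / (T - x)) := by
      have : u x ^ (-c - 1) = u x ^ (-c) * u x ^ (-1 : ℝ) := by
        rw [← Real.rpow_add (hupos x hx)]; ring_nf
      rw [this, Real.rpow_neg_one]
      congr 1
      rw [hu]
      field_simp
    refine h3.congr_deriv ?_
    rw [key]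
    have hTne : (T : ℝ) ≠ 0 := ne_of_gt hT
    have hTxne : T - x ≠ 0 := ne_of_gt hTx
    simp only [hh]
    field_simp
  -- F is antitone on Ico 0 T
  have hcontu : ContinuousOn h (Set.Ico 0 T) := by
    apply ContinuousOn.mul
    · apply ContinuousOn.rpow_const
      · exact (continuous_const.sub continuous_id).continuousOn.div_const T
      · intro x hx
        exact Or.inl (ne_of_gt (hupos x hx.2))
    · exact (Real.continuous_exp.comp (continuous_const.mul continuous_id)).continuousOn
  have hanti : AntitoneOn F (Set.Ico 0 T) := by
    apply antitoneOn_of_deriv_nonpos (convex_Ico 0 T)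
    · exact (hVc.mono (Set.Ico_subset_Ici_self)).mul hcontu
    · rw [interior_Ico]
      intro x hx
      obtain ⟨v, hv, -⟩ := hV' x hx.1.le (ne_of_lt hx.2)
      exact ((hv.mul (hhder x hx.2)).differentiableAt).differentiableWithinAt
    · rw [interior_Ico]
      intro x hx
      obtain ⟨v, hv, hvle⟩ := hV' x hx.1.le (ne_of_lt hx.2)
      have hFd : HasDerivAt F (v * h x + V x * ((c / (T - x) + a) * h x)) x :=
        hv.mul (hhder x hx.2)
      rw [hFd.deriv]
      have hg : gain κ T x = κ / (T - x) := by
        rw [gain, if_pos ⟨hx.1.le, hx.2⟩]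
      have hTx : 0 < T - x := by linarith [hx.2]
      have hb' : b * (κ / (T - x)) = c / (T - x) := by rw [hcdef]; ring
      have hineq : v + (c / (T - x) + a) * V x ≤ 0 := by
        rw [hg, hb'] at hvle; linarith [hvle]
      have : v * h x + V x * ((c / (T - x) + a) * h x)
          = (v + (c / (T - x) + a) * V x) * h x := by ring
      rw [this]
      exact mul_nonpos_of_nonpos_of_nonneg hineq (hhpos x hx.2).le
  -- Part 1
  have part1 : ∀ t : ℝ, 0 ≤ t → t < T →
      V t ≤ ((T - t) / T) ^ (κ * b) * Real.exp (-a * t) * V 0 := by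
    intro t ht htT
    have hmem0 : (0:ℝ) ∈ Set.Ico (0:ℝ) T := ⟨le_refl _, hT⟩
    have hmemt : t ∈ Set.Ico (0:ℝ) T := ⟨ht, htT⟩
    have hle : F t ≤ F 0 := hanti hmem0 hmemt ht
    have hF0 : F 0 = V 0 := by
      simp [hF, hh, hu, div_self (ne_of_gt hT), Real.one_rpow]
    rw [hF0] at hle
    -- multiply by g t = u t ^ c * exp (-a t)
    have hut : 0 < u t := hupos t htT
    have hinv : u t ^ (-c) = (u t ^ c)⁻¹ := Real.rpow_neg hut.le c
    have hupow : 0 < u t ^ c := Real.rpow_pos_of_pos hut c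
    -- F t = V t * (u t ^ c)⁻¹ * exp (a t)
    have hFt : F t = V t * (u t ^ c)⁻¹ * Real.exp (a * t) := by
      show V t * (u t ^ (-c) * Real.exp (a * t)) = _
      rw [hinv]; ring
    rw [hFt] at hle
    have hexp : Real.exp (-a * t) = (Real.exp (a * t))⁻¹ := by
      rw [← Real.exp_neg]; ring_nf
    have : V t = (V t * (u t ^ c)⁻¹ * Real.exp (a * t)) * (u t ^ c * (Real.exp (a*t))⁻¹) := by
      field_simp
    rw [this, hexp]
    calc (V t * (u t ^ c)⁻¹ * Real.exp (a * t)) * (u t ^ c * (Real.exp (a*t))⁻¹)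
        ≤ V 0 * (u t ^ c * (Real.exp (a*t))⁻¹) := by
          apply mul_le_mul_of_nonneg_right hle
          positivity
      _ = u t ^ c * (Real.exp (a*t))⁻¹ * V 0 := by ring
  -- V T = 0
  have hVT : V T = 0 := by
    have hVTnn : 0 ≤ V T := hVnn T hT.le
    have hne : Filter.NeBot (nhdsWithin T (Set.Ioo 0 T)) := by
      rw [← mem_closure_iff_nhdsWithin_neBot, closure_Ioo (ne_of_lt hT)]
      exact ⟨hT.le, le_refl T⟩
    have htend1 : Filter.Tendsto V (nhdsWithin T (Set.Ioo 0 T)) (nhds (V T)) := by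
      apply (hVc.continuousWithinAt (Set.mem_Ici.mpr hT.le)).mono_left
      apply nhdsWithin_mono
      intro x hx; exact hx.1.le
    have htend2 : Filter.Tendsto (fun t => ((T - t) / T) ^ (κ * b) * Real.exp (-a * t) * V 0)
        (nhdsWithin T (Set.Ioo 0 T)) (nhds 0) := by
      have h1 : Filter.Tendsto (fun t : ℝ => (T - t) / T) (nhds T) (nhds 0) := by
        have : Continuous (fun t : ℝ => (T - t) / T) :=
          (continuous_const.sub continuous_id).div_const T
        have := this.tendsto T
        simpa using this
      have h2 : Filter.Tendsto (fun t : ℝ => ((T - t) / T) ^ (κ * b)) (nhds T) (nhds 0) := by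
        have hc : ContinuousAt (fun y : ℝ => y ^ (κ * b)) 0 :=
          Real.continuousAt_rpow_const 0 (κ * b) (Or.inr hc0.le)
        have := hc.tendsto.comp h1
        simpa [Function.comp_def, Real.zero_rpow (ne_of_gt (mul_pos hκ0 hb))] using this
      have h3 : Filter.Tendsto (fun t : ℝ => ((T - t) / T) ^ (κ * b) * Real.exp (-a * t) * V 0)
          (nhds T) (nhds (0 * Real.exp (-a * T) * V 0)) := by
        exact (h2.mul ((Real.continuous_exp.comp
          (continuous_const.mul continuous_id)).tendsto T)).mul tendsto_const_nhds
      simpa using h3.mono_left nhdsWithin_le_nhds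
    have hev : ∀ᶠ t in nhdsWithin T (Set.Ioo 0 T),
        V t ≤ ((T - t) / T) ^ (κ * b) * Real.exp (-a * t) * V 0 := by
      filter_upwards [self_mem_nhdsWithin] with t ht
      exact part1 t ht.1.le ht.2
    have := le_of_tendsto_of_tendsto htend1 htend2 hev
    linarith
  -- Part 2
  refine ⟨part1, ?_⟩
  intro t ht
  rcases eq_or_lt_of_le ht with rfl | htT
  · exact hVT
  have hVTnn : 0 ≤ V t := hVnn t (by linarith)
  -- G = V * exp(a ·) antitone on Ici T
  set G : ℝ → ℝ := fun x => V x * Real.exp (a * x) with hG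
  have hGanti : AntitoneOn G (Set.Ici T) := by
    apply antitoneOn_of_deriv_nonpos (convex_Ici T)
    · apply ContinuousOn.mul
      · exact hVc.mono (fun x hx => le_trans hT.le hx)
      · exact (Real.continuous_exp.comp (continuous_const.mul continuous_id)).continuousOn
    · rw [interior_Ici]
      intro x hx
      obtain ⟨v, hv, -⟩ := hV' x (by linarith [Set.mem_Ioi.mp hx]) (ne_of_gt hx)
      have hexp : HasDerivAt (fun y => Real.exp (a * y)) (a * Real.exp (a * x)) x := by
        have : HasDerivAt (fun y : ℝ => a * y) a x := by
          simpa using (hasDerivAt_id x).const_mul a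
        simpa [mul_comm] using this.exp
      exact ((hv.mul hexp).differentiableAt).differentiableWithinAt
    · rw [interior_Ici]
      intro x hx
      have hxT : T < x := hx
      obtain ⟨v, hv, hvle⟩ := hV' x (by linarith) (ne_of_gt hxT)
      have hexp : HasDerivAt (fun y => Real.exp (a * y)) (a * Real.exp (a * x)) x := by
        have : HasDerivAt (fun y : ℝ => a * y) a x := by
          simpa using (hasDerivAt_id x).const_mul a
        simpa [mul_comm] using this.exp
      have hGd : HasDerivAt G (v * Real.exp (a * x) + V x * (a * Real.exp (a * x))) x :=
        hv.mul hexp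
      rw [hGd.deriv]
      have hg : gain κ T x = 0 := by
        rw [gain, if_neg]; rintro ⟨-, h2⟩; linarith
      rw [hg] at hvle
      have hv' : v + a * V x ≤ 0 := by linarith
      have : v * Real.exp (a * x) + V x * (a * Real.exp (a * x))
          = (v + a * V x) * Real.exp (a * x) := by ring
      rw [this]
      exact mul_nonpos_of_nonpos_of_nonneg hv' (Real.exp_pos _).le
  have hle : G t ≤ G T := hGanti (Set.mem_Ici.mpr (le_refl T)) (Set.mem_Ici.mpr ht) ht
  have hGT : G T = 0 := by rw [hG]; simp [hVT]
  rw [hGT] at hle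
  have hle' : V t * Real.exp (a * t) ≤ 0 := hle
  have : V t ≤ 0 := by
    by_contra hpos
    push_neg at hpos
    nlinarith [Real.exp_pos (a * t), hle']

  linarith
end

section
/- Suppose the digraph of W is strongly connected and structurally balanced with gauge g for the full node set. Then for every nominal prescribed-time trajectory X with parameters ρ1, ρ2 > 0 and prescribed time T1 > 0, there exists c ∈ ℝ such that X t k = c · g k for all t ≥ T1 and all nodes k (prescribed-time bipartite consensus within the preassigned time T1). -/
open Matrix

/-- Signed Laplacian `L = D − W` with `D k k = ∑_l |W k l|`. -/
noncomputable def sLap {N : ℕ} (W : Matrix (Fin N) (Fin N) ℝ) : Matrix (Fin N) (Fin N) ℝ :=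
  Matrix.diagonal (fun k => ∑ l, |W k l|) - W

/-- Node `i` reaches node `j`: reflexive–transitive closure of the edge relation
`E i j ↔ W j i ≠ 0`. -/
def Reaches {N : ℕ} (W : Matrix (Fin N) (Fin N) ℝ) : Fin N → Fin N → Prop :=
  Relation.ReflTransGen (fun i j => W j i ≠ 0)

def StronglyConnected {N : ℕ} (W : Matrix (Fin N) (Fin N) ℝ) : Prop :=
  ∀ i j, Reaches W i j

def QuasiStronglyConnected {N : ℕ} (W : Matrix (Fin N) (Fin N) ℝ) : Prop :=
  ∃ r, ∀ j, Reaches W r j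

def WeaklyConnected {N : ℕ} (W : Matrix (Fin N) (Fin N) ℝ) : Prop :=
  ∀ i j, Relation.ReflTransGen (fun a b => W b a ≠ 0 ∨ W a b ≠ 0) i j

/-- `k` is a leader: every node reaching `k` is reached back by `k`. -/
def IsLeader {N : ℕ} (W : Matrix (Fin N) (Fin N) ℝ) (k : Fin N) : Prop :=
  ∀ j, Reaches W j k → Reaches W k j

/-- Closed strong component of a leader `k`. -/
def CSC {N : ℕ} (W : Matrix (Fin N) (Fin N) ℝ) (k : Fin N) : Set (Fin N) :=
  {j | Reaches W j k ∧ Reaches W k j}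

/-- A gauge for a node set `S`. -/
def IsGauge {N : ℕ} (W : Matrix (Fin N) (Fin N) ℝ) (S : Set (Fin N)) (g : Fin N → ℝ) : Prop :=
  (∀ k ∈ S, g k = 1 ∨ g k = -1) ∧ ∀ k ∈ S, ∀ l ∈ S, g k * W k l * g l = |W k l|

/-- Nominal prescribed-time trajectory of the protocol (4). -/
def NominalTraj {N : ℕ} (W : Matrix (Fin N) (Fin N) ℝ) (κ ρ1 ρ2 T1 : ℝ)
    (X : ℝ → Fin N → ℝ) : Prop :=
  Continuous X ∧
  ∀ t : ℝ, 0 ≤ t → t ≠ T1 →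
    HasDerivAt X ((-(ρ1 + ρ2 * gain κ T1 t)) • (sLap W).mulVec (X t)) t

lemma left_kernel_pos_set {N : ℕ} (W : Matrix (Fin N) (Fin N) ℝ)
    (hSC : StronglyConnected W)
    (ξ : Fin N → ℝ) (hker : ∀ j, ∑ i, ξ i * |W i j| = ξ j * ∑ l, |W j l|) :
    (∀ i, ¬ 0 < ξ i) ∨ (∀ i, 0 < ξ i) := by
  classical
  set ξp : Fin N → ℝ := fun i => max (ξ i) 0 with hξp
  have hξp_nonneg : ∀ i, 0 ≤ ξp i := fun i => le_max_right _ _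
  have hξp_ge : ∀ i, ξ i ≤ ξp i := fun i => le_max_left _ _
  set e : Fin N → ℝ := fun j => ξp j * (∑ l, |W j l|) - ∑ i, ξp i * |W i j| with he
  have he_nonpos : ∀ j, e j ≤ 0 := by
    intro j
    by_cases hj : 0 < ξ j
    · have h1 : ξp j = ξ j := max_eq_left hj.le
      have h2 : ∑ i, ξ i * |W i j| ≤ ∑ i, ξp i * |W i j| :=
        Finset.sum_le_sum fun i _ => mul_le_mul_of_nonneg_right (hξp_ge i) (abs_nonneg _)
      simp only [he, h1]
      rw [← hker j]
      linarith
    · have h1 : ξp j = 0 := max_eq_right (not_lt.1 hj)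
      have h2 : 0 ≤ ∑ i, ξp i * |W i j| :=
        Finset.sum_nonneg fun i _ => mul_nonneg (hξp_nonneg i) (abs_nonneg _)
      simp only [he, h1, zero_mul]
      linarith
  have hsum : ∑ j, e j = 0 := by
    simp only [he, Finset.sum_sub_distrib]
    rw [Finset.sum_comm]
    simp [Finset.mul_sum]
  have he_zero : ∀ j, e j = 0 := by
    intro j
    have := (Finset.sum_eq_zero_iff_of_nonpos (fun i _ => he_nonpos i)).1 hsum
    exact this j (Finset.mem_univ j)
  have key : ∀ j, ¬ 0 < ξ j → ∀ i, 0 < ξ i → W i j = 0 := by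
    intro j hj i hi
    have h1 : ξp j = 0 := max_eq_right (not_lt.1 hj)
    have h2 : ∑ i, ξp i * |W i j| = 0 := by
      have := he_zero j; simp only [he, h1, zero_mul] at this; linarith
    have h3 : ξp i * |W i j| = 0 := by
      have := (Finset.sum_eq_zero_iff_of_nonneg
        (fun i _ => mul_nonneg (hξp_nonneg i) (abs_nonneg _))).1 h2
      exact this i (Finset.mem_univ i)
    have h4 : ξp i = ξ i := max_eq_left hi.le
    rw [h4] at h3
    rcases mul_eq_zero.1 h3 with h | h
    · exact absurd h hi.ne'
    · exact abs_eq_zero.1 h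
  by_cases hpos : ∃ i, 0 < ξ i
  · right
    obtain ⟨i0, hi0⟩ := hpos
    intro i
    by_contra hi
    -- every node reached from i stays non-positive
    have hreach : ∀ x, Reaches W i x → ¬ 0 < ξ x := by
      intro x hx
      induction hx with
      | refl => exact hi
      | @tail y z hby hedge ih =>
        intro hz
        exact hedge (key y ih z hz)
    exact hreach i0 (hSC i i0) hi0
  · left; push_neg at hpos; intro i; exact not_lt.2 (hpos i)

lemma exists_perron {N : ℕ} (hN : 2 ≤ N) (W : Matrix (Fin N) (Fin N) ℝ)
    (hSC : StronglyConnected W) :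
    ∃ ξ : Fin N → ℝ, (∀ i, 0 < ξ i) ∧
      ∀ j, ∑ i, ξ i * |W i j| = ξ j * ∑ l, |W j l| := by
  classical
  have hN0 : 0 < N := by omega
  set Lh : Matrix (Fin N) (Fin N) ℝ :=
    Matrix.diagonal (fun k => ∑ l, |W k l|) - Matrix.of (fun k l => |W k l|) with hLh
  have hdet : Lh.det = 0 := by
    rw [← Matrix.exists_mulVec_eq_zero_iff]
    refine ⟨fun _ => 1, ?_, ?_⟩
    · intro h
      have := congrFun h ⟨0, hN0⟩
      simp at this
    · funext k
      simp [hLh, Matrix.mulVec, dotProduct, Matrix.sub_apply, Matrix.diagonal_apply,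
        sub_mul, Finset.sum_sub_distrib, Finset.sum_ite_eq]
  obtain ⟨ξ0, hξ0ne, hξ0⟩ := Matrix.exists_vecMul_eq_zero_iff.2 hdet
  have hker : ∀ (ξ : Fin N → ℝ), ξ ᵥ* Lh = 0 →
      ∀ j, ∑ i, ξ i * |W i j| = ξ j * ∑ l, |W j l| := by
    intro ξ hξ j
    have := congrFun hξ j
    simp only [Matrix.vecMul, dotProduct, hLh, Matrix.sub_apply, Matrix.diagonal_apply,
      Matrix.of_apply, Pi.zero_apply] at this
    simp only [mul_sub, Finset.sum_sub_distrib, mul_ite, mul_zero,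
      Finset.sum_ite_eq' Finset.univ j, Finset.mem_univ, if_true] at this
    linarith
  have h1 := hker ξ0 hξ0
  have h2 : (-ξ0) ᵥ* Lh = 0 := by rw [Matrix.neg_vecMul, hξ0, neg_zero]
  have h2' := hker (-ξ0) h2
  rcases left_kernel_pos_set W hSC ξ0 h1 with hA | hA
  · rcases left_kernel_pos_set W hSC (-ξ0) h2' with hB | hB
    · exfalso
      apply hξ0ne
      funext i
      have hA' := hA i; have hB' := hB i
      simp only [Pi.neg_apply, not_lt, neg_nonpos] at hA' hB'
      have : ξ0 i = 0 := le_antisymm hA' hB'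
      simpa using this
    · exact ⟨-ξ0, hB, h2'⟩
  · exact ⟨ξ0, hA, h1⟩

/-- Unsigned Laplacian applied to a vector, componentwise. -/
noncomputable def Lv {N : ℕ} (W : Matrix (Fin N) (Fin N) ℝ) (z : Fin N → ℝ) (i : Fin N) : ℝ :=
  (∑ l, |W i l|) * z i - ∑ l, |W i l| * z l

lemma quad_identity {N : ℕ} (W : Matrix (Fin N) (Fin N) ℝ) (ξ : Fin N → ℝ)
    (hker : ∀ j, ∑ i, ξ i * |W i j| = ξ j * ∑ l, |W j l|) (z : Fin N → ℝ) :
    2 * ∑ i, ξ i * z i * Lv W z i = ∑ i, ∑ j, ξ i * |W i j| * (z i - z j)^2 := by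
  have expand : ∀ i j : Fin N, ξ i * |W i j| * (z i - z j)^2
      = ξ i * |W i j| * (z i)^2 - 2 * (ξ i * (|W i j| * z j) * z i) + ξ i * |W i j| * (z j)^2 := by
    intro i j; ring
  rw [Finset.sum_congr rfl fun i _ => Finset.sum_congr rfl fun j _ => expand i j]
  simp only [Finset.sum_add_distrib, Finset.sum_sub_distrib]
  have t1 : ∀ i : Fin N, ∑ j, ξ i * |W i j| * (z i)^2 = ξ i * (∑ l, |W i l|) * (z i)^2 := by
    intro i; rw [← Finset.sum_mul, ← Finset.mul_sum]
  have t3 : ∑ i, ∑ j, ξ i * |W i j| * (z j)^2 = ∑ j, ξ j * (∑ l, |W j l|) * (z j)^2 := by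
    rw [Finset.sum_comm]
    refine Finset.sum_congr rfl fun j _ => ?_
    rw [← hker j, Finset.sum_mul]
  simp only [t1, t3]
  simp only [Lv, mul_sub, Finset.mul_sum, Finset.sum_sub_distrib]
  ring_nf
  have e1 : ∀ x : Fin N, (ξ x * z x ^ 2 * ∑ l, |W x l|) * 2
      = (∑ i, ξ x * |W x i|) * z x ^ 2 * 2 := by
    intro x; rw [← Finset.mul_sum]; ring
  have e2 : ∀ x y : Fin N, ξ x * z x * |W x y| * z y * 2 = ξ x * |W x y| * z y * z x * 2 := by
    intro x y; ring
  rw [Finset.sum_congr rfl fun x _ => e1 x,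
    Finset.sum_congr rfl fun x _ => Finset.sum_congr rfl fun y _ => e2 x y]
  simp only [Finset.sum_mul]

lemma spectral_gap {N : ℕ} (hN : 2 ≤ N) (W : Matrix (Fin N) (Fin N) ℝ)
    (hSC : StronglyConnected W) (ξ : Fin N → ℝ) (hξpos : ∀ i, 0 < ξ i) :
    ∃ lam : ℝ, 0 < lam ∧ ∀ z : Fin N → ℝ, (∑ i, ξ i * z i = 0) →
      lam * ∑ i, (z i)^2 ≤ ∑ i, ∑ j, ξ i * |W i j| * (z i - z j)^2 := by
  classical
  have hN0 : 0 < N := by omega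
  set Q : (Fin N → ℝ) → ℝ := fun z => ∑ i, ∑ j, ξ i * |W i j| * (z i - z j)^2 with hQ
  have hQnonneg : ∀ z, 0 ≤ Q z := fun z =>
    Finset.sum_nonneg fun i _ => Finset.sum_nonneg fun j _ =>
      mul_nonneg (mul_nonneg (hξpos i).le (abs_nonneg _)) (sq_nonneg _)
  have hQcont : Continuous Q := by
    refine continuous_finset_sum _ fun i _ => continuous_finset_sum _ fun j _ => ?_
    exact (continuous_const.mul (((continuous_apply i).sub (continuous_apply j)).pow 2))
  have key : ∀ z : Fin N → ℝ, Q z = 0 → (∑ i, ξ i * z i = 0) → z = 0 := by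
    intro z hQz horth
    have hterm : ∀ i j : Fin N, ξ i * |W i j| * (z i - z j)^2 = 0 := by
      intro i j
      have h1 : ∀ i ∈ Finset.univ, (0:ℝ) ≤ ∑ j, ξ i * |W i j| * (z i - z j)^2 :=
        fun i _ => Finset.sum_nonneg fun j _ =>
          mul_nonneg (mul_nonneg (hξpos i).le (abs_nonneg _)) (sq_nonneg _)
      have h2 := (Finset.sum_eq_zero_iff_of_nonneg h1).1 hQz i (Finset.mem_univ i)
      have h3 : ∀ j ∈ Finset.univ, (0:ℝ) ≤ ξ i * |W i j| * (z i - z j)^2 :=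
        fun j _ => mul_nonneg (mul_nonneg (hξpos i).le (abs_nonneg _)) (sq_nonneg _)
      exact (Finset.sum_eq_zero_iff_of_nonneg h3).1 h2 j (Finset.mem_univ j)
    have hedge : ∀ i j : Fin N, W i j ≠ 0 → z i = z j := by
      intro i j hW
      have := hterm i j
      rcases mul_eq_zero.1 this with h | h
      · rcases mul_eq_zero.1 h with h' | h'
        · exact absurd h' (hξpos i).ne'
        · exact absurd (abs_eq_zero.1 h') hW
      · have := pow_eq_zero_iff (n := 2) (by norm_num) |>.1 h
        linarith [sub_eq_zero.1 this]
    have hconst : ∀ i j : Fin N, Reaches W i j → z j = z i := by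
      intro i j hij
      induction hij with
      | refl => rfl
      | @tail y x _ hedge' ih => rw [← ih]; exact (hedge x y hedge')
    -- all components equal
    set i0 : Fin N := ⟨0, hN0⟩
    have hall : ∀ j, z j = z i0 := fun j => hconst i0 j (hSC i0 j)
    have hsum : ∑ i, ξ i * z i = (∑ i, ξ i) * z i0 := by
      rw [Finset.sum_mul]
      exact Finset.sum_congr rfl fun i _ => by rw [hall i]
    have hξsum : 0 < ∑ i, ξ i :=
      Finset.sum_pos (fun i _ => hξpos i) ⟨i0, Finset.mem_univ i0⟩
    have hz0 : z i0 = 0 := by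
      rw [hsum] at horth
      exact (mul_eq_zero.1 horth).resolve_left hξsum.ne'
    funext j; rw [hall j, hz0]; rfl
  -- normalization
  have hnormalize : ∀ z : Fin N → ℝ, (∑ i, ξ i * z i = 0) → 0 < ∑ i, (z i)^2 →
      (∑ i, ((fun k => z k / Real.sqrt (∑ i, (z i)^2)) i)^2 = 1 ∧
       ∑ i, ξ i * ((fun k => z k / Real.sqrt (∑ i, (z i)^2)) i) = 0) := by
    intro z horth hr
    have hs : (0:ℝ) < Real.sqrt (∑ i, (z i)^2) := Real.sqrt_pos.2 hr
    constructor
    · simp only [div_pow, ← Finset.sum_div]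
      rw [Real.sq_sqrt (by positivity)]
      exact div_self hr.ne'
    · simp only [mul_div_assoc']
      rw [← Finset.sum_div, horth, zero_div]
  set S : Set (Fin N → ℝ) := {z | ∑ i, (z i)^2 = 1 ∧ ∑ i, ξ i * z i = 0} with hS
  by_cases hne : S.Nonempty
  · -- compact minimum
    have hclosed : IsClosed S := by
      apply IsClosed.inter
      · exact isClosed_eq (continuous_finset_sum _ fun i _ => (continuous_apply i).pow 2)
          continuous_const
      · exact isClosed_eq (continuous_finset_sum _ fun i _ =>
          continuous_const.mul (continuous_apply i)) continuous_const
    have hbdd : Bornology.IsBounded S := by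
      apply Metric.isBounded_iff_subset_closedBall (0 : Fin N → ℝ) |>.2
      refine ⟨1, fun z hz => ?_⟩
      simp only [Metric.mem_closedBall, dist_zero_right]
      rw [pi_norm_le_iff_of_nonneg zero_le_one]
      intro i
      have h1 : (z i)^2 ≤ 1 := by
        rw [← hz.1]
        exact Finset.single_le_sum (fun j (_ : j ∈ Finset.univ) => sq_nonneg (z j))
          (Finset.mem_univ i)
      rw [Real.norm_eq_abs, ← Real.sqrt_one, ← Real.sqrt_sq_eq_abs]
      exact Real.sqrt_le_sqrt h1
    have hcpt : IsCompact S := Metric.isCompact_of_isClosed_isBounded hclosed hbdd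
    obtain ⟨z0, hz0S, hz0min⟩ := hcpt.exists_isMinOn hne hQcont.continuousOn
    have hz0ne : z0 ≠ 0 := by
      intro h
      rw [h] at hz0S
      simp [hS] at hz0S
    have hlam : 0 < Q z0 := by
      rcases (hQnonneg z0).lt_or_eq with h | h
      · exact h
      · exact absurd (key z0 h.symm hz0S.2) hz0ne
    refine ⟨Q z0, hlam, fun z horth => ?_⟩
    rcases (Finset.sum_nonneg fun i (_ : i ∈ Finset.univ) => sq_nonneg (z i)).lt_or_eq with hr | hr
    · set r : ℝ := ∑ i, (z i)^2
      set w : Fin N → ℝ := fun k => z k / Real.sqrt r with hw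
      obtain ⟨hw1, hw2⟩ := hnormalize z horth hr
      have hwS : w ∈ S := ⟨hw1, hw2⟩
      have hmin := hz0min hwS
      have hQw : Q w = Q z / r := by
        simp only [hQ, hw]
        rw [Finset.sum_div]
        refine Finset.sum_congr rfl fun i _ => ?_
        rw [Finset.sum_div]
        refine Finset.sum_congr rfl fun j _ => ?_
        rw [div_sub_div_same, div_pow, Real.sq_sqrt (le_of_lt hr), mul_div_assoc]
      have hmin' : Q z0 ≤ Q w := hmin
      rw [hQw, le_div_iff₀ hr] at hmin'
      exact hmin'
    · rw [← hr, mul_zero]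
      exact hQnonneg z
  · -- S empty: every orthogonal vector is zero
    refine ⟨1, one_pos, fun z horth => ?_⟩
    rcases (Finset.sum_nonneg fun i (_ : i ∈ Finset.univ) => sq_nonneg (z i)).lt_or_eq with hr | hr
    · exfalso
      obtain ⟨hw1, hw2⟩ := hnormalize z horth hr
      exact hne ⟨_, hw1, hw2⟩
    · rw [← hr, mul_zero]
      exact hQnonneg z

lemma sLap_mulVec {N : ℕ} (W : Matrix (Fin N) (Fin N) ℝ) (x : Fin N → ℝ) (k : Fin N) :
    (sLap W).mulVec x k = (∑ l, |W k l|) * x k - ∑ l, W k l * x l := by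
  simp only [sLap, Matrix.mulVec, dotProduct, Matrix.sub_apply, Matrix.diagonal_apply,
    sub_mul, Finset.sum_sub_distrib]
  congr 1
  simp [Finset.sum_ite_eq, ite_mul]

section Gauge
variable {N : ℕ} (W : Matrix (Fin N) (Fin N) ℝ) (g : Fin N → ℝ)
  (hg1 : ∀ k, g k = 1 ∨ g k = -1) (hg2 : ∀ k l, g k * W k l * g l = |W k l|)

include hg1 hg2 in
lemma gauge_W : ∀ k l, g k * W k l = |W k l| * g l := by
  intro k l
  have hsq : g l * g l = 1 := by rcases hg1 l with h | h <;> rw [h] <;> norm_num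
  have := hg2 k l
  calc g k * W k l = g k * W k l * (g l * g l) := by rw [hsq, mul_one]
    _ = (g k * W k l * g l) * g l := by ring
    _ = |W k l| * g l := by rw [this]

include hg1 hg2 in
lemma gauge_mulVec : ∀ x : Fin N → ℝ, ∀ k,
    g k * (sLap W).mulVec x k = Lv W (fun l => g l * x l) k := by
  intro x k
  rw [sLap_mulVec, Lv]
  rw [mul_sub]
  congr 1
  · ring
  · rw [Finset.mul_sum]
    refine Finset.sum_congr rfl fun l _ => ?_
    rw [← mul_assoc, gauge_W W g hg1 hg2 k l]
    ring

include hg1 hg2 in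
lemma gauge_null : ∀ c : ℝ, (sLap W).mulVec (fun k => c * g k) = 0 := by
  intro c
  funext k
  rw [sLap_mulVec]
  have : ∀ l, W k l * (c * g l) = c * (|W k l| * g k) := by
    intro l
    have hsqk : g k * g k = 1 := by rcases hg1 k with h | h <;> rw [h] <;> norm_num
    have h := gauge_W W g hg1 hg2 k l
    calc W k l * (c * g l) = c * ((g k * g k) * W k l * g l) := by rw [hsqk]; ring
      _ = c * (g k * (g k * W k l) * g l) := by ring
      _ = c * (g k * (|W k l| * g l) * g l) := by rw [h]
      _ = c * (|W k l| * g k * (g l * g l)) := by ring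
      _ = c * (|W k l| * g k) := by
          rcases hg1 l with h' | h' <;> rw [h'] <;> ring
  rw [Finset.sum_congr rfl fun l _ => this l, ← Finset.mul_sum, ← Finset.sum_mul]
  simp; ring

end Gauge

lemma sum_xi_Lv {N : ℕ} (W : Matrix (Fin N) (Fin N) ℝ) (ξ : Fin N → ℝ)
    (hker : ∀ j, ∑ i, ξ i * |W i j| = ξ j * ∑ l, |W j l|) (z : Fin N → ℝ) :
    ∑ i, ξ i * Lv W z i = 0 := by
  simp only [Lv, mul_sub, Finset.sum_sub_distrib, Finset.mul_sum]
  rw [Finset.sum_comm]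
  have e : ∀ l : Fin N, ∑ x, ξ x * (|W x l| * z l) = ξ l * ((∑ j, |W l j|) * z l) := by
    intro l
    have h1 : ∑ x, ξ x * (|W x l| * z l) = (∑ x, ξ x * |W x l|) * z l := by
      rw [Finset.sum_mul]; exact Finset.sum_congr rfl fun x _ => by ring
    rw [h1, hker l]; ring
  rw [Finset.sum_congr rfl fun l (_ : l ∈ Finset.univ) => e l, sub_self]

lemma Lv_sub_const {N : ℕ} (W : Matrix (Fin N) (Fin N) ℝ) (v : Fin N → ℝ) (c : ℝ) :
    Lv W (fun k => v k - c) = Lv W v := by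
  funext i
  simp only [Lv, mul_sub, Finset.sum_sub_distrib, ← Finset.sum_mul]
  ring

open Filter Topology in
theorem prescribed_time_bipartite_consensus_strong
    {N : ℕ} (hN : 2 ≤ N) (W : Matrix (Fin N) (Fin N) ℝ)
    (hdiag : ∀ k, W k k = 0)
    (hSC : StronglyConnected W)
    (g : Fin N → ℝ) (hg : IsGauge W Set.univ g)
    (κ ρ1 ρ2 T1 : ℝ) (hκ : 2 < κ) (hρ1 : 0 < ρ1) (hρ2 : 0 < ρ2) (hT1 : 0 < T1)
    (X : ℝ → Fin N → ℝ) (hX : NominalTraj W κ ρ1 ρ2 T1 X) :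
    ∃ c : ℝ, ∀ t : ℝ, T1 ≤ t → ∀ k, X t k = c * g k := by
  classical
  obtain ⟨hg1', hg2'⟩ := hg
  have hg1 : ∀ k, g k = 1 ∨ g k = -1 := fun k => hg1' k (Set.mem_univ k)
  have hg2 : ∀ k l, g k * W k l * g l = |W k l| :=
    fun k l => hg2' k (Set.mem_univ k) l (Set.mem_univ l)
  have hgsq : ∀ k, g k * g k = 1 := by
    intro k; rcases hg1 k with h | h <;> rw [h] <;> norm_num
  have hκ0 : (0:ℝ) < κ := by linarith
  obtain ⟨ξ, hξpos, hker⟩ := exists_perron hN W hSC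
  obtain ⟨lam, hlam, hgap⟩ := spectral_gap hN W hSC ξ hξpos
  set ξs : ℝ := ∑ i, ξ i with hξs
  have hξs_pos : 0 < ξs :=
    Finset.sum_pos (fun i _ => hξpos i) ⟨⟨0, by omega⟩, Finset.mem_univ _⟩
  set a : ℝ → ℝ := fun t => ρ1 + ρ2 * gain κ T1 t with ha
  set y : ℝ → Fin N → ℝ := fun t k => g k * X t k with hy
  have hXy : ∀ t k, X t k = g k * y t k := by
    intro t k
    simp only [hy, ← mul_assoc, hgsq k, one_mul]
  have hycont : ∀ k, Continuous fun t => y t k :=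
    fun k => continuous_const.mul ((continuous_apply k).comp hX.1)
  have hyd : ∀ t, 0 ≤ t → t ≠ T1 → ∀ k,
      HasDerivAt (fun s => y s k) (-(a t) * Lv W (y t) k) t := by
    intro t ht hne k
    have h1 := (hasDerivAt_pi.1 (hX.2 t ht hne)) k
    have h2 := h1.const_mul (g k)
    refine h2.congr_deriv ?_
    simp only [Pi.smul_apply, smul_eq_mul]
    rw [show Lv W (y t) k = g k * (sLap W).mulVec (X t) k from
      (gauge_mulVec W g hg1 hg2 (X t) k).symm]
    ring
  -- conserved quantity
  set I : ℝ → ℝ := fun t => ∑ i, ξ i * y t i with hI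
  set m : ℝ := I 0 with hm
  set c' : ℝ := m / ξs with hc'
  have hIcont : Continuous I := continuous_finset_sum _ fun i _ => continuous_const.mul (hycont i)
  have hId : ∀ t ∈ Set.Ico (0:ℝ) T1, HasDerivAt I 0 t := by
    intro t ht
    have hsum : HasDerivAt I (∑ i, ξ i * (-(a t) * Lv W (y t) i)) t :=
      HasDerivAt.fun_sum (fun i _ => ((hyd t ht.1 (ne_of_lt ht.2) i).const_mul (ξ i)))
    convert hsum using 1
    have h0 := sum_xi_Lv W ξ hker (y t)
    have : ∑ i, ξ i * (-(a t) * Lv W (y t) i) = -(a t) * ∑ i, ξ i * Lv W (y t) i := by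
      rw [Finset.mul_sum]
      exact Finset.sum_congr rfl fun i _ => by ring
    rw [this, h0, mul_zero]
  have hIconst : ∀ t ∈ Set.Ico (0:ℝ) T1, I t = m := by
    intro t ht
    have := constant_of_has_deriv_right_zero (f := I) (a := 0) (b := t)
      hIcont.continuousOn
      (fun x hx => ((hId x ⟨hx.1, lt_of_lt_of_le (lt_of_lt_of_le hx.2 le_rfl)
        ht.2.le⟩).hasDerivWithinAt))
      t (Set.right_mem_Icc.2 ht.1)
    exact this
  set z : ℝ → Fin N → ℝ := fun t k => y t k - c' with hz
  have horth : ∀ t ∈ Set.Ico (0:ℝ) T1, ∑ i, ξ i * z t i = 0 := by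
    intro t ht
    have h1 : ∑ i, ξ i * z t i = I t - ξs * c' := by
      simp only [hz, mul_sub]
      rw [Finset.sum_sub_distrib, ← Finset.sum_mul]
    rw [h1, hIconst t ht, hc']
    field_simp
    ring
  set V : ℝ → ℝ := fun t => ∑ i, ξ i * (z t i)^2 with hV
  have hVnonneg : ∀ t, 0 ≤ V t :=
    fun t => Finset.sum_nonneg fun i _ => mul_nonneg (hξpos i).le (sq_nonneg _)
  have hVcont : Continuous V := by
    refine continuous_finset_sum _ fun i _ => continuous_const.mul ?_
    exact ((hycont i).sub continuous_const).pow 2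
  have hVd : ∀ t ∈ Set.Ico (0:ℝ) T1,
      HasDerivAt V (-(a t) * (2 * ∑ i, ξ i * z t i * Lv W (z t) i)) t := by
    intro t ht
    have hLvz : Lv W (z t) = Lv W (y t) := Lv_sub_const W (y t) c'
    have hzd : ∀ i, HasDerivAt (fun s => z s i) (-(a t) * Lv W (z t) i) t := by
      intro i
      have := (hyd t ht.1 (ne_of_lt ht.2) i).sub_const c'
      rw [← hLvz] at this
      exact this
    have hsum : HasDerivAt V
        (∑ i, ξ i * (2 * z t i ^ 1 * (-(a t) * Lv W (z t) i))) t := by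
      apply HasDerivAt.fun_sum
      intro i _
      exact ((hzd i).pow 2).const_mul (ξ i)
    convert hsum using 1
    rw [Finset.mul_sum, Finset.mul_sum]
    exact Finset.sum_congr rfl fun i _ => by ring
  -- decay rate
  set β : ℝ := lam * (ρ2 * κ) / ξs with hβ
  have hβpos : 0 < β := by
    apply div_pos _ hξs_pos
    positivity
  set u : ℝ → ℝ := fun t => Real.exp (-β * Real.log (T1 - t)) with hu
  have hupos : ∀ t, 0 < u t := fun t => Real.exp_pos _
  have hud : ∀ t, t < T1 → HasDerivAt u (u t * (β / (T1 - t))) t := by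
    intro t ht
    have hTt : (0:ℝ) < T1 - t := sub_pos.2 ht
    have h1 : HasDerivAt (fun s : ℝ => T1 - s) (-1) t := by
      simpa using (hasDerivAt_id t).const_sub T1
    have h2 : HasDerivAt (fun s => Real.log (T1 - s)) (-1 / (T1 - t)) t :=
      h1.log hTt.ne'
    have h3 : HasDerivAt (fun s => -β * Real.log (T1 - s)) (-β * (-1 / (T1 - t))) t :=
      h2.const_mul (-β)
    have h4 := h3.exp
    convert h4 using 1
    rw [hu]
    field_simp
  set h : ℝ → ℝ := fun t => V t * u t with hh
  have hhd : ∀ t ∈ Set.Ico (0:ℝ) T1, HasDerivAt h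
      ((-(a t) * (2 * ∑ i, ξ i * z t i * Lv W (z t) i)) * u t
        + V t * (u t * (β / (T1 - t)))) t :=
    fun t ht => (hVd t ht).mul (hud t ht.2)
  have hhd_nonpos : ∀ t ∈ Set.Ico (0:ℝ) T1,
      (-(a t) * (2 * ∑ i, ξ i * z t i * Lv W (z t) i)) * u t
        + V t * (u t * (β / (T1 - t))) ≤ 0 := by
    intro t ht
    have hTt : (0:ℝ) < T1 - t := sub_pos.2 ht.2
    have hgaint : gain κ T1 t = κ / (T1 - t) := if_pos ⟨ht.1, ht.2⟩
    have hS : lam * ∑ i, (z t i)^2 ≤ 2 * ∑ i, ξ i * z t i * Lv W (z t) i := by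
      have h0 := hgap (z t) (horth t ht)
      rw [← quad_identity W ξ hker (z t)] at h0
      exact h0
    set P : ℝ := ∑ i, (z t i)^2 with hP
    have hPnonneg : 0 ≤ P := Finset.sum_nonneg fun i _ => sq_nonneg _
    have hVle : V t ≤ ξs * P := by
      rw [hV, hP, Finset.mul_sum]
      refine Finset.sum_le_sum fun i _ => ?_
      exact mul_le_mul_of_nonneg_right
        (Finset.single_le_sum (fun j (_ : j ∈ Finset.univ) => (hξpos j).le)
          (Finset.mem_univ i)) (sq_nonneg _)
    have hat : ρ2 * (κ / (T1 - t)) ≤ a t := by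
      rw [ha]
      simp only [hgaint]
      linarith
    have hat0 : 0 ≤ a t := le_trans (by positivity) hat
    set S : ℝ := 2 * ∑ i, ξ i * z t i * Lv W (z t) i with hSdef
    -- key chain : V t * (β/(T1-t)) ≤ a t * S
    have hkey : V t * (β / (T1 - t)) ≤ a t * S := by
      have c1 : V t * (β / (T1 - t)) ≤ (ξs * P) * (β / (T1 - t)) :=
        mul_le_mul_of_nonneg_right hVle (by positivity)
      have c2 : (ξs * P) * (β / (T1 - t)) = (ρ2 * (κ / (T1 - t))) * (lam * P) := by
        rw [hβ]
        field_simp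
      have c3 : (ρ2 * (κ / (T1 - t))) * (lam * P) ≤ a t * (lam * P) :=
        mul_le_mul_of_nonneg_right hat (by positivity)
      have c4 : a t * (lam * P) ≤ a t * S :=
        mul_le_mul_of_nonneg_left hS hat0
      exact le_trans c1 (le_trans (le_of_eq c2) (le_trans c3 c4))
    have hut := (hupos t).le
    nlinarith [mul_le_mul_of_nonneg_right hkey hut]
  -- h is nonincreasing on [0, T1)
  have hanti : ∀ s ∈ Set.Ico (0:ℝ) T1, h s ≤ h 0 := by
    intro s hs
    rcases eq_or_lt_of_le hs.1 with h0 | h0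
    · rw [← h0]
    · have hsub : Set.Icc (0:ℝ) s ⊆ Set.Ico (0:ℝ) T1 :=
        fun x hx => ⟨hx.1, lt_of_le_of_lt hx.2 hs.2⟩
      have hmono : AntitoneOn h (Set.Icc 0 s) := by
        apply antitoneOn_of_deriv_nonpos (convex_Icc 0 s)
        · intro x hx
          exact ((hhd x (hsub hx)).differentiableAt).continuousAt.continuousWithinAt
        · intro x hx
          rw [interior_Icc] at hx
          exact ((hhd x (hsub ⟨hx.1.le, hx.2.le⟩)).differentiableAt).differentiableWithinAt
        · intro x hx
          rw [interior_Icc] at hx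
          have hx' := hsub ⟨hx.1.le, hx.2.le⟩
          rw [(hhd x hx').deriv]
          exact hhd_nonpos x hx'
      exact hmono (Set.left_mem_Icc.2 hs.1) (Set.right_mem_Icc.2 hs.1) hs.1
  -- bound on V
  have hVbound : ∀ s ∈ Set.Ico (0:ℝ) T1,
      V s ≤ h 0 * Real.exp (β * Real.log (T1 - s)) := by
    intro s hs
    have h1 := hanti s hs
    have h2 : V s = h s * Real.exp (β * Real.log (T1 - s)) := by
      rw [hh]
      simp only [hu]
      rw [mul_assoc, ← Real.exp_add]
      simp
    rw [h2]
    exact mul_le_mul_of_nonneg_right h1 (Real.exp_pos _).le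
  -- the bound tends to 0
  have hlim : Tendsto (fun s => h 0 * Real.exp (β * Real.log (T1 - s)))
      (nhdsWithin T1 (Set.Iio T1)) (nhds 0) := by
    have h1 : Tendsto (fun s : ℝ => T1 - s) (nhdsWithin T1 (Set.Iio T1))
        (nhdsWithin 0 (Set.Ioi 0)) := by
      apply tendsto_nhdsWithin_of_tendsto_nhds_of_eventually_within
      · have hcont : Continuous (fun s : ℝ => T1 - s) := continuous_const.sub continuous_id
        have h0 := hcont.tendsto T1
        rw [sub_self] at h0
        exact h0.mono_left nhdsWithin_le_nhds
      · filter_upwards [self_mem_nhdsWithin] with s hs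
        exact Set.mem_Ioi.2 (sub_pos.2 hs)
    have h2 : Tendsto (fun s => Real.log (T1 - s)) (nhdsWithin T1 (Set.Iio T1)) atBot :=
      Real.tendsto_log_nhdsGT_zero.comp h1
    have h3 : Tendsto (fun s => β * Real.log (T1 - s)) (nhdsWithin T1 (Set.Iio T1)) atBot := by
      exact Tendsto.const_mul_atBot hβpos h2
    have h4 := Real.tendsto_exp_atBot.comp h3
    have h5 := h4.const_mul (h 0)
    simpa using h5
  -- V T1 = 0
  have hVT1 : V T1 = 0 := by
    have hVtend : Tendsto V (nhdsWithin T1 (Set.Iio T1)) (nhds (V T1)) :=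
      (hVcont.tendsto T1).mono_left nhdsWithin_le_nhds
    have hev : ∀ᶠ s in nhdsWithin T1 (Set.Iio T1),
        V s ≤ h 0 * Real.exp (β * Real.log (T1 - s)) := by
      filter_upwards [Ioo_mem_nhdsLT_of_mem (Set.mem_Ioc.2 ⟨hT1, le_refl T1⟩)] with s hs
      exact hVbound s ⟨hs.1.le, hs.2⟩
    have hle : V T1 ≤ 0 := le_of_tendsto_of_tendsto hVtend hlim hev
    exact le_antisymm hle (hVnonneg T1)
  have hzT1 : ∀ k, z T1 k = 0 := by
    intro k
    have h1 := (Finset.sum_eq_zero_iff_of_nonneg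
      (fun i (_ : i ∈ Finset.univ) => mul_nonneg (hξpos i).le (sq_nonneg (z T1 i)))).1 hVT1
      k (Finset.mem_univ k)
    have h2 : (z T1 k)^2 = 0 := (mul_eq_zero.1 h1).resolve_left (hξpos k).ne'
    exact pow_eq_zero_iff (two_ne_zero) |>.1 h2
  have hXT1 : ∀ k, X T1 k = c' * g k := by
    intro k
    have hy1 : y T1 k = c' := by
      have := hzT1 k
      simp only [hz] at this
      linarith
    rw [hXy T1 k, hy1, mul_comm]
  -- after T1 : Gronwall uniqueness
  set w : ℝ → Fin N → ℝ := fun s k => X s k - c' * g k with hw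
  have hwT1 : w T1 = 0 := by
    funext k
    simp only [hw, hXT1 k, sub_self, Pi.zero_apply]
  have hwcont : Continuous w := by
    apply continuous_pi
    intro k
    exact ((continuous_apply k).comp hX.1).sub continuous_const
  have hwd : ∀ s, T1 < s → HasDerivAt w ((-ρ1) • (sLap W).mulVec (w s)) s := by
    intro s hs
    have h1 := hX.2 s (le_of_lt (lt_of_le_of_lt hT1.le hs)) (ne_of_gt hs)
    have hgain0 : gain κ T1 s = 0 := by
      apply if_neg
      rintro ⟨_, h2⟩
      exact absurd h2 (not_lt.2 hs.le)
    rw [hgain0] at h1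
    have hmv : (sLap W).mulVec (X s) = (sLap W).mulVec (w s) := by
      have hXw : X s = w s + (fun k => c' * g k) := by
        funext k
        simp [hw]
      rw [hXw, Matrix.mulVec_add, gauge_null W g hg1 hg2 c', add_zero]
    rw [hmv] at h1
    have h2 : HasDerivAt w ((-(ρ1 + ρ2 * 0)) • (sLap W).mulVec (w s)) s := by
      have := h1.sub_const (fun k => c' * g k)
      exact this
    convert h2 using 2
    ring
  set C : ℝ := ∑ k, ∑ l, |sLap W k l| with hC
  have hCnn : 0 ≤ C := Finset.sum_nonneg fun k _ => Finset.sum_nonneg fun l _ => abs_nonneg _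
  have hbound : ∀ v : Fin N → ℝ, ‖(sLap W).mulVec v‖ ≤ C * ‖v‖ := by
    intro v
    rw [pi_norm_le_iff_of_nonneg (by positivity)]
    intro k
    have h1 : (sLap W).mulVec v k = ∑ l, sLap W k l * v l := rfl
    rw [Real.norm_eq_abs, h1]
    calc |∑ l, sLap W k l * v l| ≤ ∑ l, |sLap W k l * v l| := Finset.abs_sum_le_sum_abs _ _
      _ = ∑ l, |sLap W k l| * |v l| := by simp [abs_mul]
      _ ≤ ∑ l, |sLap W k l| * ‖v‖ := by
          refine Finset.sum_le_sum fun l _ => ?_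
          exact mul_le_mul_of_nonneg_left ((norm_le_pi_norm v l).trans_eq' (Real.norm_eq_abs _).symm) (abs_nonneg _)
      _ = (∑ l, |sLap W k l|) * ‖v‖ := by rw [Finset.sum_mul]
      _ ≤ C * ‖v‖ := by
          apply mul_le_mul_of_nonneg_right _ (norm_nonneg v)
          exact Finset.single_le_sum
            (fun k (_ : k ∈ Finset.univ) => Finset.sum_nonneg fun l _ => abs_nonneg (sLap W k l))
            (Finset.mem_univ k)
  set K : ℝ := ρ1 * C with hK
  have hgron : ∀ s, T1 < s → ∀ t', s ≤ t' →
      ‖w t'‖ ≤ ‖w s‖ * Real.exp (K * (t' - s)) := by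
    intro s hs t' hst
    have hres := norm_le_gronwallBound_of_norm_deriv_right_le
      (f := w) (f' := fun x => (-ρ1) • (sLap W).mulVec (w x))
      (δ := ‖w s‖) (K := K) (ε := 0) (a := s) (b := t')
      hwcont.continuousOn
      (fun x hx => (hwd x (lt_of_lt_of_le hs hx.1)).hasDerivWithinAt)
      le_rfl
      (fun x _ => by
        rw [norm_smul]
        simp only [norm_neg, Real.norm_eq_abs, abs_of_pos hρ1]
        calc ρ1 * ‖(sLap W).mulVec (w x)‖ ≤ ρ1 * (C * ‖w x‖) :=
              mul_le_mul_of_nonneg_left (hbound (w x)) hρ1.le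
          _ = K * ‖w x‖ + 0 := by rw [hK]; ring)
      t' (Set.right_mem_Icc.2 hst)
    rwa [gronwallBound_ε0] at hres
  have hw0 : ∀ t', T1 < t' → w t' = 0 := by
    intro t' ht'
    have hev : ∀ᶠ s in nhdsWithin T1 (Set.Ioi T1),
        ‖w t'‖ ≤ ‖w s‖ * Real.exp (K * (t' - s)) := by
      filter_upwards [Ioo_mem_nhdsGT_of_mem (Set.mem_Ico.2 ⟨le_refl T1, ht'⟩)] with s hs
      exact hgron s hs.1 t' hs.2.le
    have htend : Tendsto (fun s => ‖w s‖ * Real.exp (K * (t' - s)))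
        (nhdsWithin T1 (Set.Ioi T1)) (nhds (‖w T1‖ * Real.exp (K * (t' - T1)))) := by
      apply Tendsto.mul
      · exact ((hwcont.norm.tendsto T1).mono_left nhdsWithin_le_nhds)
      · have : Continuous fun s : ℝ => Real.exp (K * (t' - s)) :=
          Real.continuous_exp.comp (continuous_const.mul (continuous_const.sub continuous_id))
        exact (this.tendsto T1).mono_left nhdsWithin_le_nhds
    rw [hwT1, norm_zero, zero_mul] at htend
    have hle : ‖w t'‖ ≤ 0 := ge_of_tendsto htend hev
    exact norm_le_zero_iff.1 hle
  refine ⟨c', fun t ht k => ?_⟩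
  rcases eq_or_lt_of_le ht with heq | hlt
  · rw [← heq]
    exact hXT1 k
  · have h0 := congrFun (hw0 t hlt) k
    simp only [hw, Pi.zero_apply] at h0
    linarith
end

section
/- Suppose the digraph of W is strongly connected and structurally unbalanced (no gauge for the full node set exists). Then for every nominal prescribed-time trajectory X with parameters ρ1, ρ2 > 0 and prescribed time T1 > 0, X t k = 0 for all t ≥ T1 and all nodes k (prescribed-time stability within the preassigned time T1). -/
open Matrix

section PTSAux
open Finset

lemma exists_pos_balanced {N : ℕ} (hN : 0 < N) (W : Matrix (Fin N) (Fin N) ℝ)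
    (hSC : StronglyConnected W) :
    ∃ ξ : Fin N → ℝ, (∀ k, 0 < ξ k) ∧
      ∀ l, ξ l * (∑ m, |W l m|) = ∑ k, ξ k * |W k l| := by
  set d : Fin N → ℝ := fun k => ∑ m, |W k m| with hd
  set M : Matrix (Fin N) (Fin N) ℝ :=
    Matrix.diagonal d - Matrix.of (fun k l => |W k l|) with hM
  have h1 : M.mulVec (fun _ => (1:ℝ)) = 0 := by
    funext k
    simp only [hM, Matrix.mulVec, dotProduct, Matrix.sub_apply, Matrix.of_apply,
      mul_one, sub_mul, Finset.sum_sub_distrib, Pi.zero_apply]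
    rw [Finset.sum_eq_single_of_mem k (Finset.mem_univ k) (fun b _ hb => Matrix.diagonal_apply_ne d (Ne.symm hb))]
    simp [hd]
  have hdet : M.det = 0 := by
    rw [← Matrix.exists_mulVec_eq_zero_iff]
    refine ⟨fun _ => 1, ?_, h1⟩
    intro h
    have := congrFun h ⟨0, hN⟩
    simp at this
  obtain ⟨v, hv0, hv⟩ := Matrix.exists_vecMul_eq_zero_iff.mpr hdet
  -- column equations for v
  have hcol : ∀ l, v l * d l = ∑ k, v k * |W k l| := by
    intro l
    have := congrFun hv l
    simp only [Matrix.vecMul, dotProduct, hM, Matrix.sub_apply, Matrix.of_apply,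
      mul_sub, Finset.sum_sub_distrib, Pi.zero_apply] at this
    rw [Finset.sum_eq_single_of_mem l (Finset.mem_univ l)
      (fun b _ hb => by rw [Matrix.diagonal_apply_ne d hb, mul_zero])] at this
    rw [Matrix.diagonal_apply_eq] at this
    linarith [this]
  -- |v| also satisfies the balance
  have hdnn : ∀ l, 0 ≤ d l := fun l => Finset.sum_nonneg fun m _ => abs_nonneg _
  have hle : ∀ l, |v l| * d l ≤ ∑ k, |v k| * |W k l| := by
    intro l
    calc |v l| * d l = |v l * d l| := by rw [abs_mul, abs_of_nonneg (hdnn l)]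
    _ = abs (∑ k, v k * |W k l|) := by rw [hcol l]
    _ ≤ ∑ k, abs (v k * |W k l|) := Finset.abs_sum_le_sum_abs _ _
    _ = ∑ k, |v k| * |W k l| := by simp [abs_mul, abs_abs]
  have hsum : ∑ l, (∑ k, |v k| * |W k l| - |v l| * d l) = 0 := by
    rw [Finset.sum_sub_distrib, Finset.sum_comm]
    simp only [← Finset.mul_sum, ← hd]
    ring
  have hbal : ∀ l, |v l| * d l = ∑ k, |v k| * |W k l| := by
    intro l
    have := (Finset.sum_eq_zero_iff_of_nonneg
      (fun i _ => sub_nonneg.mpr (hle i))).mp hsum l (Finset.mem_univ l)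
    linarith
  -- strict positivity
  have hprop : ∀ a b, v a = 0 → W b a ≠ 0 → v b = 0 := by
    intro a b ha hW
    have h0 : ∑ k, |v k| * |W k a| = 0 := by rw [← hbal a, ha]; simp
    have := (Finset.sum_eq_zero_iff_of_nonneg
      (fun i _ => mul_nonneg (abs_nonneg _) (abs_nonneg _))).mp h0 b (Finset.mem_univ b)
    rcases mul_eq_zero.mp this with h | h
    · exact abs_eq_zero.mp h
    · exact absurd (abs_eq_zero.mp h) hW
  have hpos : ∀ k, v k ≠ 0 := by
    intro k hk
    apply hv0
    funext j
    have hr := hSC k j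
    induction hr with
    | refl => exact hk
    | tail _ hbc ih => exact hprop _ _ ih hbc
  exact ⟨fun k => |v k|, fun k => abs_pos.mpr (hpos k), hbal⟩

noncomputable def QF {N : ℕ} (W : Matrix (Fin N) (Fin N) ℝ) (ξ : Fin N → ℝ) (x : Fin N → ℝ) : ℝ :=
  ∑ k, ∑ l, ξ k * (|W k l| * x k ^ 2 + |W k l| * x l ^ 2 - 2 * W k l * x k * x l)

lemma QF_eq {N : ℕ} (W : Matrix (Fin N) (Fin N) ℝ) (ξ : Fin N → ℝ)
    (hbal : ∀ l, ξ l * (∑ m, |W l m|) = ∑ k, ξ k * |W k l|) (x : Fin N → ℝ) :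
    QF W ξ x = 2 * ∑ k, ξ k * x k * ((sLap W).mulVec x k) := by
  have hmv : ∀ k, (sLap W).mulVec x k = (∑ m, |W k m|) * x k - ∑ l, W k l * x l := by
    intro k
    simp only [sLap, Matrix.mulVec, dotProduct, Matrix.sub_apply, sub_mul,
      Finset.sum_sub_distrib]
    congr 1
    rw [Finset.sum_eq_single_of_mem k (Finset.mem_univ k)
      (fun b _ hb => by rw [Matrix.diagonal_apply_ne _ (Ne.symm hb), zero_mul])]
    rw [Matrix.diagonal_apply_eq]
  have e1 : ∑ k, ∑ l, ξ k * (|W k l| * x k ^ 2) = ∑ k, ξ k * (∑ m, |W k m|) * x k ^ 2 := by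
    refine Finset.sum_congr rfl fun k _ => ?_
    rw [Finset.mul_sum, Finset.sum_mul]
    exact Finset.sum_congr rfl fun l _ => by ring
  have e2 : ∑ k, ∑ l, ξ k * (|W k l| * x l ^ 2) = ∑ k, ξ k * (∑ m, |W k m|) * x k ^ 2 := by
    rw [Finset.sum_comm]
    refine Finset.sum_congr rfl fun l _ => ?_
    have : ∑ k, ξ k * (|W k l| * x l ^ 2) = (∑ k, ξ k * |W k l|) * x l ^ 2 := by
      rw [Finset.sum_mul]; exact Finset.sum_congr rfl fun k _ => by ring
    rw [this, ← hbal l]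
  calc QF W ξ x = (∑ k, ∑ l, ξ k * (|W k l| * x k ^ 2))
        + (∑ k, ∑ l, ξ k * (|W k l| * x l ^ 2))
        - ∑ k, ∑ l, ξ k * (2 * W k l * x k * x l) := by
        simp only [QF, mul_add, mul_sub, Finset.sum_add_distrib, Finset.sum_sub_distrib]
    _ = 2 * ∑ k, (ξ k * (∑ m, |W k m|) * x k ^ 2 - ξ k * x k * ∑ l, W k l * x l) := by
        rw [e1, e2, Finset.mul_sum]
        have : ∑ k, ∑ l, ξ k * (2 * W k l * x k * x l)
            = ∑ k, 2 * (ξ k * x k * ∑ l, W k l * x l) := by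
          refine Finset.sum_congr rfl fun k _ => ?_
          rw [Finset.mul_sum, Finset.mul_sum]
          exact Finset.sum_congr rfl fun l _ => by ring
        rw [this, ← Finset.sum_add_distrib, ← Finset.sum_sub_distrib]
        exact Finset.sum_congr rfl fun k _ => by ring
    _ = 2 * ∑ k, ξ k * x k * ((sLap W).mulVec x k) := by
        congr 1
        refine Finset.sum_congr rfl fun k _ => ?_
        rw [hmv k]; ring

lemma QF_term_nonneg {N : ℕ} (W : Matrix (Fin N) (Fin N) ℝ) (ξ : Fin N → ℝ)
    (hξ : ∀ k, 0 ≤ ξ k) (x : Fin N → ℝ) (k l : Fin N) :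
    0 ≤ ξ k * (|W k l| * x k ^ 2 + |W k l| * x l ^ 2 - 2 * W k l * x k * x l) := by
  refine mul_nonneg (hξ k) ?_
  nlinarith [abs_nonneg (W k l), le_abs_self (W k l), neg_abs_le (W k l),
    sq_nonneg (x k - x l), sq_nonneg (x k + x l)]

lemma QF_nonneg {N : ℕ} (W : Matrix (Fin N) (Fin N) ℝ) (ξ : Fin N → ℝ)
    (hξ : ∀ k, 0 ≤ ξ k) (x : Fin N → ℝ) : 0 ≤ QF W ξ x :=
  Finset.sum_nonneg fun k _ => Finset.sum_nonneg fun l _ => QF_term_nonneg W ξ hξ x k l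

lemma QF_pos_def {N : ℕ} (W : Matrix (Fin N) (Fin N) ℝ)
    (hSC : StronglyConnected W)
    (hunb : ¬ ∃ g : Fin N → ℝ, IsGauge W Set.univ g)
    (ξ : Fin N → ℝ) (hξ : ∀ k, 0 < ξ k) (x : Fin N → ℝ)
    (hQF : QF W ξ x = 0) : x = 0 := by
  have hterm : ∀ k l, |W k l| * x k ^ 2 + |W k l| * x l ^ 2 - 2 * W k l * x k * x l = 0 := by
    intro k l
    have h1 := (Finset.sum_eq_zero_iff_of_nonneg
      (fun k _ => Finset.sum_nonneg fun l _ => QF_term_nonneg W ξ (fun k => (hξ k).le) x k l)).mp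
      hQF k (Finset.mem_univ k)
    have h2 := (Finset.sum_eq_zero_iff_of_nonneg
      (fun l _ => QF_term_nonneg W ξ (fun k => (hξ k).le) x k l)).mp h1 l (Finset.mem_univ l)
    have := (hξ k).ne'
    rcases mul_eq_zero.mp h2 with h | h
    · exact absurd h this
    · exact h
  by_contra hx
  have ⟨i, hi⟩ : ∃ i, x i ≠ 0 := by
    by_contra h
    push_neg at h
    exact hx (funext h)
  -- all |x j| equal |x i|
  have habs : ∀ j, |x j| = |x i| := by
    intro j
    have hr := hSC i j
    induction hr with
    | refl => rfl
    | tail _ hbc ih =>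
      rename_i b c _
      have ht := hterm c b
      have hWcb : |W c b| > 0 := abs_pos.mpr hbc
      have key : (|x c| - |x b|) ^ 2 ≤ 0 := by
        have h2 : W c b * (x c * x b) ≤ |W c b| * (|x c| * |x b|) := by
          calc W c b * (x c * x b) ≤ |W c b * (x c * x b)| := le_abs_self _
          _ = |W c b| * (|x c| * |x b|) := by rw [abs_mul, abs_mul]
        nlinarith [sq_abs (x c), sq_abs (x b), hWcb]
      have : |x c| - |x b| = 0 := by nlinarith [sq_nonneg (|x c| - |x b|)]
      have : |x c| = |x b| := by linarith
      rw [this, ih]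
  have hm : 0 < |x i| := abs_pos.mpr hi
  apply hunb
  refine ⟨fun j => x j / |x i|, ?_, ?_⟩
  · intro k _
    have : abs (x k / |x i|) = 1 := by
      rw [abs_div, abs_abs, habs k, div_self hm.ne']
    rcases abs_eq (by norm_num : (0:ℝ) ≤ 1) |>.mp this with h | h
    · exact Or.inl h
    · exact Or.inr h
  · intro k _ l _
    by_cases hW : W k l = 0
    · simp [hW]
    · have ht := hterm k l
      have hk2 : x k ^ 2 = |x i| ^ 2 := by rw [← sq_abs (x k), habs k]
      have hl2 : x l ^ 2 = |x i| ^ 2 := by rw [← sq_abs (x l), habs l]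
      have hkey : W k l * x k * x l = |W k l| * |x i| ^ 2 := by
        linear_combination (-(1:ℝ)/2) * ht + (|W k l|/2) * hk2 + (|W k l|/2) * hl2
      field_simp
      linear_combination hkey

lemma QF_smul {N : ℕ} (W : Matrix (Fin N) (Fin N) ℝ) (ξ : Fin N → ℝ) (r : ℝ) (x : Fin N → ℝ) :
    QF W ξ (fun i => r * x i) = r ^ 2 * QF W ξ x := by
  simp only [QF, Finset.mul_sum]
  exact Finset.sum_congr rfl fun k _ => Finset.sum_congr rfl fun l _ => by ring

lemma QF_continuous {N : ℕ} (W : Matrix (Fin N) (Fin N) ℝ) (ξ : Fin N → ℝ) :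
    Continuous fun x : Fin N → ℝ => QF W ξ x := by
  apply continuous_finset_sum; intro k _
  apply continuous_finset_sum; intro l _
  exact continuous_const.mul (((continuous_const.mul ((continuous_apply k).pow 2)).add
    (continuous_const.mul ((continuous_apply l).pow 2))).sub
    ((continuous_const.mul (continuous_apply k)).mul (continuous_apply l)))

lemma QF_coercive {N : ℕ} (hN : 0 < N) (W : Matrix (Fin N) (Fin N) ℝ)
    (hSC : StronglyConnected W)
    (hunb : ¬ ∃ g : Fin N → ℝ, IsGauge W Set.univ g)
    (ξ : Fin N → ℝ) (hξ : ∀ k, 0 < ξ k) :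
    ∃ c > 0, ∀ x, c * (∑ k, ξ k * x k ^ 2) ≤ QF W ξ x := by
  set S : Set (Fin N → ℝ) := {x | ∑ k, x k ^ 2 = 1} with hS
  have hScont : Continuous fun x : Fin N → ℝ => ∑ k, x k ^ 2 :=
    continuous_finset_sum _ fun k _ => (continuous_apply k).pow 2
  have hclosed : IsClosed S := isClosed_eq hScont continuous_const
  have hbdd : Bornology.IsBounded S := by
    apply (Metric.isBounded_closedBall (x := (0 : Fin N → ℝ)) (r := 1)).subset
    intro x hx
    rw [Metric.mem_closedBall, dist_zero_right]
    rw [pi_norm_le_iff_of_nonneg zero_le_one]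
    intro i
    rw [Real.norm_eq_abs, ← sq_le_one_iff_abs_le_one]
    calc x i ^ 2 ≤ ∑ k, x k ^ 2 :=
          Finset.single_le_sum (fun k _ => sq_nonneg (x k)) (Finset.mem_univ i)
    _ = 1 := hx
  have hcomp : IsCompact S := Metric.isCompact_of_isClosed_isBounded hclosed hbdd
  have hne : S.Nonempty := by
    refine ⟨fun j => if j = ⟨0, hN⟩ then 1 else 0, ?_⟩
    have : ∀ j : Fin N, (if j = ⟨0, hN⟩ then (1:ℝ) else 0) ^ 2
        = if j = ⟨0, hN⟩ then 1 else 0 := by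
      intro j; by_cases h : j = ⟨0, hN⟩ <;> simp [h]
    simp only [hS, Set.mem_setOf_eq, this]
    simp
  obtain ⟨x0, hx0S, hmin⟩ := hcomp.exists_isMinOn hne (QF_continuous W ξ).continuousOn
  set c0 : ℝ := QF W ξ x0 with hc0
  have hc0pos : 0 < c0 := by
    rcases lt_or_eq_of_le (QF_nonneg W ξ (fun k => (hξ k).le) x0) with h | h
    · exact h
    · exfalso
      have hx00 : x0 = 0 := QF_pos_def W hSC hunb ξ hξ x0 h.symm
      have := hx0S
      rw [hS, Set.mem_setOf_eq, hx00] at this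
      simp at this
  have key : ∀ x : Fin N → ℝ, c0 * (∑ k, x k ^ 2) ≤ QF W ξ x := by
    intro x
    by_cases hx : x = 0
    · subst hx; simp [QF]
    · have hspos : 0 < ∑ k, x k ^ 2 := by
        obtain ⟨i, hi⟩ : ∃ i, x i ≠ 0 := by
          by_contra h; push_neg at h; exact hx (funext h)
        exact Finset.sum_pos' (fun k _ => sq_nonneg _) ⟨i, Finset.mem_univ i, by positivity⟩
      set r : ℝ := Real.sqrt (∑ k, x k ^ 2) with hr
      have hrpos : 0 < r := Real.sqrt_pos.mpr hspos
      have hr2 : r ^ 2 = ∑ k, x k ^ 2 := Real.sq_sqrt hspos.le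
      set y : Fin N → ℝ := fun j => x j / r with hy
      have hyS : y ∈ S := by
        rw [hS, Set.mem_setOf_eq]
        simp only [hy, div_pow, ← Finset.sum_div, ← hr2]
        exact div_self (by positivity)
      have hxy : x = fun j => r * y j := by
        funext j; rw [hy]; field_simp
      calc c0 * (∑ k, x k ^ 2) = r ^ 2 * c0 := by rw [hr2]; ring
      _ ≤ r ^ 2 * QF W ξ y := by
          have h2 : c0 ≤ QF W ξ y := hmin hyS
          exact mul_le_mul_of_nonneg_left h2 (sq_nonneg r)
      _ = QF W ξ x := by rw [hxy, QF_smul]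
  refine ⟨c0 / (∑ k, ξ k), div_pos hc0pos (Finset.sum_pos (fun k _ => hξ k) ⟨⟨0,hN⟩, Finset.mem_univ _⟩), ?_⟩
  intro x
  have h1 : ∑ k, ξ k * x k ^ 2 ≤ (∑ k, ξ k) * (∑ k, x k ^ 2) := by
    rw [Finset.sum_mul]
    refine Finset.sum_le_sum fun k _ => ?_
    exact mul_le_mul_of_nonneg_left
      (Finset.single_le_sum (fun j _ => sq_nonneg (x j)) (Finset.mem_univ k)) (hξ k).le
  have hSpos : 0 < ∑ k, ξ k := Finset.sum_pos (fun k _ => hξ k) ⟨⟨0,hN⟩, Finset.mem_univ _⟩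
  calc c0 / (∑ k, ξ k) * (∑ k, ξ k * x k ^ 2)
      ≤ c0 / (∑ k, ξ k) * ((∑ k, ξ k) * (∑ k, x k ^ 2)) := by
        apply mul_le_mul_of_nonneg_left h1 (by positivity)
  _ = c0 * (∑ k, x k ^ 2) := by field_simp
  _ ≤ QF W ξ x := key x

end PTSAux

theorem prescribed_time_stability_strong_unbalanced
    {N : ℕ} (hN : 2 ≤ N) (W : Matrix (Fin N) (Fin N) ℝ)
    (hdiag : ∀ k, W k k = 0)
    (hSC : StronglyConnected W)
    (hunb : ¬ ∃ g : Fin N → ℝ, IsGauge W Set.univ g)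
    (κ ρ1 ρ2 T1 : ℝ) (hκ : 2 < κ) (hρ1 : 0 < ρ1) (hρ2 : 0 < ρ2) (hT1 : 0 < T1)
    (X : ℝ → Fin N → ℝ) (hX : NominalTraj W κ ρ1 ρ2 T1 X) :
    ∀ t : ℝ, T1 ≤ t → ∀ k, X t k = 0 := by
  have hN0 : 0 < N := by omega
  have hκ0 : (0:ℝ) < κ := by linarith
  obtain ⟨ξ, hξpos, hbal⟩ := exists_pos_balanced hN0 W hSC
  obtain ⟨c, hc, hcoer⟩ := QF_coercive hN0 W hSC hunb ξ hξpos
  set V : ℝ → ℝ := fun t => ∑ k, ξ k * (X t k) ^ 2 with hVdef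
  have hVcont : Continuous V := continuous_finset_sum _ fun k _ =>
    continuous_const.mul (((continuous_apply k).comp hX.1).pow 2)
  have hVnn : ∀ t, 0 ≤ V t := fun t => Finset.sum_nonneg fun k _ =>
    mul_nonneg (hξpos k).le (sq_nonneg _)
  have hQFV : ∀ t, c * V t ≤ QF W ξ (X t) := fun t => hcoer (X t)
  have hQFnn : ∀ t, 0 ≤ QF W ξ (X t) := fun t =>
    le_trans (mul_nonneg hc.le (hVnn t)) (hQFV t)
  -- derivative of V
  have hV' : ∀ t, 0 ≤ t → t ≠ T1 →
      HasDerivAt V (-(ρ1 + ρ2 * gain κ T1 t) * QF W ξ (X t)) t := by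
    intro t ht hne
    have hd := hX.2 t ht hne
    have hdk : ∀ k, HasDerivAt (fun s => X s k)
        ((-(ρ1 + ρ2 * gain κ T1 t)) * ((sLap W).mulVec (X t) k)) t := by
      intro k
      have := (hasDerivAt_pi.mp hd) k
      simpa [Pi.smul_apply, smul_eq_mul] using this
    have hsum : HasDerivAt V (∑ k, ξ k * ((2:ℕ) * X t k ^ 1 *
        ((-(ρ1 + ρ2 * gain κ T1 t)) * ((sLap W).mulVec (X t) k)))) t := by
      apply HasDerivAt.fun_sum
      intro k _
      exact ((hdk k).pow 2).const_mul (ξ k)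
    convert hsum using 1
    rw [QF_eq W ξ hbal (X t), Finset.mul_sum, Finset.mul_sum]
    exact Finset.sum_congr rfl fun k _ => by push_cast; ring
  -- Phase A constants
  set a : ℝ := c * ρ2 * κ with hadef
  have ha : 0 < a := by positivity
  set φ : ℝ → ℝ := fun t => V t * (T1 - t) ^ (-a) with hφdef
  have hrpowD : ∀ t, t < T1 → HasDerivAt (fun s => (T1 - s) ^ (-a))
      (a * (T1 - t) ^ (-a - 1)) t := by
    intro t ht
    have hu : (0:ℝ) < T1 - t := by linarith
    have h0 : HasDerivAt (fun s : ℝ => T1 - s) (-1) t := by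
      simpa using (hasDerivAt_id t).const_sub T1
    have h1 : HasDerivAt (fun u : ℝ => u ^ (-a)) (-a * (T1 - t) ^ (-a - 1)) (T1 - t) :=
      Real.hasDerivAt_rpow_const (Or.inl hu.ne')
    have := h1.comp t h0
    exact this.congr_deriv (by ring)
  have hφD : ∀ t ∈ Set.Ioo (0:ℝ) T1, HasDerivAt φ
      ((-(ρ1 + ρ2 * gain κ T1 t) * QF W ξ (X t)) * (T1 - t) ^ (-a)
        + V t * (a * (T1 - t) ^ (-a - 1))) t := by
    intro t ht
    exact (hV' t ht.1.le (ne_of_lt ht.2)).mul (hrpowD t ht.2)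
  have hφD_nonpos : ∀ t ∈ Set.Ioo (0:ℝ) T1,
      (-(ρ1 + ρ2 * gain κ T1 t) * QF W ξ (X t)) * (T1 - t) ^ (-a)
        + V t * (a * (T1 - t) ^ (-a - 1)) ≤ 0 := by
    intro t ht
    have hu : (0:ℝ) < T1 - t := by linarith [ht.2]
    have hg : gain κ T1 t = κ / (T1 - t) := by
      rw [gain, if_pos ⟨ht.1.le, ht.2⟩]
    set P : ℝ := (T1 - t) ^ (-a) with hP
    have hPpos : 0 < P := Real.rpow_pos_of_pos hu _
    have hP1 : (T1 - t) ^ (-a - 1) = P / (T1 - t) := by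
      rw [hP, Real.rpow_sub hu, Real.rpow_one]
    set Q : ℝ := QF W ξ (X t) with hQ
    have hQc : c * V t ≤ Q := hQFV t
    have hQnn : 0 ≤ Q := hQFnn t
    rw [hg, hP1]
    have hiden : (-(ρ1 + ρ2 * (κ / (T1 - t))) * Q) * P + V t * (a * (P / (T1 - t)))
        = -(ρ1 * Q * P) - (P / (T1 - t)) * (ρ2 * κ * (Q - c * V t)) := by
      rw [hadef]; field_simp; ring
    rw [hiden]
    have h1 : 0 ≤ ρ1 * Q * P := by positivity
    have h2 : 0 ≤ (P / (T1 - t)) * (ρ2 * κ * (Q - c * V t)) := by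
      apply mul_nonneg (div_nonneg hPpos.le hu.le)
      apply mul_nonneg (by positivity)
      linarith
    linarith
  have hanti : AntitoneOn φ (Set.Ico 0 T1) := by
    apply antitoneOn_of_deriv_nonpos (convex_Ico 0 T1)
    · apply hVcont.continuousOn.mul
      apply ContinuousOn.rpow_const (continuousOn_const.sub continuousOn_id)
      intro t ht
      exact Or.inl (ne_of_gt (sub_pos.mpr ht.2))
    · rw [interior_Ico]
      exact fun t ht => ((hφD t ht).differentiableAt).differentiableWithinAt
    · rw [interior_Ico]
      intro t ht
      rw [(hφD t ht).deriv]
      exact hφD_nonpos t ht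
  -- bound on V in [0, T1)
  have hbound : ∀ t, t ∈ Set.Ico (0:ℝ) T1 → V t ≤ (V 0 * T1 ^ (-a)) * (T1 - t) ^ a := by
    intro t ht
    have h0mem : (0:ℝ) ∈ Set.Ico (0:ℝ) T1 := ⟨le_refl 0, hT1⟩
    have hφle : φ t ≤ φ 0 := hanti h0mem ht ht.1
    have hu : (0:ℝ) < T1 - t := by linarith [ht.2]
    have hφ0 : φ 0 = V 0 * T1 ^ (-a) := by rw [hφdef]; simp
    have hVt : V t = φ t * (T1 - t) ^ a := by
      rw [hφdef]
      simp only
      rw [mul_assoc, ← Real.rpow_add hu]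
      simp
    rw [hVt, ← hφ0]
    exact mul_le_mul_of_nonneg_right hφle (Real.rpow_nonneg hu.le a)
  -- V T1 = 0
  have hVT1 : V T1 = 0 := by
    have h1 : Filter.Tendsto V (nhdsWithin T1 (Set.Iio T1)) (nhds (V T1)) :=
      (hVcont.tendsto T1).mono_left nhdsWithin_le_nhds
    have hbase : Filter.Tendsto (fun t => T1 - t) (nhdsWithin T1 (Set.Iio T1)) (nhds 0) := by
      apply tendsto_nhdsWithin_of_tendsto_nhds
      have hcont : Continuous (fun t : ℝ => T1 - t) := continuous_const.sub continuous_id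
      simpa using hcont.tendsto T1
    have hrpow : Filter.Tendsto (fun t => (T1 - t) ^ a) (nhdsWithin T1 (Set.Iio T1)) (nhds 0) := by
      have hca : ContinuousAt (fun u : ℝ => u ^ a) 0 :=
        Real.continuousAt_rpow_const 0 a (Or.inr ha.le)
      have := hca.tendsto.comp hbase
      rw [Real.zero_rpow ha.ne'] at this; exact this
    have h2 : Filter.Tendsto (fun t => (V 0 * T1 ^ (-a)) * (T1 - t) ^ a)
        (nhdsWithin T1 (Set.Iio T1)) (nhds 0) := by
      have := hrpow.const_mul (V 0 * T1 ^ (-a))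
      simpa using this
    have hev : ∀ᶠ t in nhdsWithin T1 (Set.Iio T1),
        V t ≤ (V 0 * T1 ^ (-a)) * (T1 - t) ^ a := by
      have hmem : Set.Ioo (0:ℝ) T1 ∈ nhdsWithin T1 (Set.Iio T1) :=
        Ioo_mem_nhdsLT_of_mem ⟨hT1, le_refl T1⟩
      filter_upwards [hmem] with t ht
      exact hbound t ⟨ht.1.le, ht.2⟩
    have h3 : Filter.Tendsto V (nhdsWithin T1 (Set.Iio T1)) (nhds 0) := by
      apply tendsto_of_tendsto_of_tendsto_of_le_of_le' tendsto_const_nhds h2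
      · exact Filter.Eventually.of_forall hVnn
      · exact hev
    exact tendsto_nhds_unique h1 h3
  -- Phase B
  have hantiB : AntitoneOn V (Set.Ici T1) := by
    apply antitoneOn_of_deriv_nonpos (convex_Ici T1) hVcont.continuousOn
    · rw [interior_Ici]
      intro t ht
      exact ((hV' t (by linarith [Set.mem_Ioi.mp ht]) (ne_of_gt (Set.mem_Ioi.mp ht))).differentiableAt).differentiableWithinAt
    · rw [interior_Ici]
      intro t ht
      have htT : T1 < t := Set.mem_Ioi.mp ht
      rw [(hV' t (by linarith) (ne_of_gt htT)).deriv]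
      have hg : gain κ T1 t = 0 := by
        rw [gain, if_neg]
        rintro ⟨-, h⟩
        linarith
      rw [hg]
      have := hQFnn t
      nlinarith [hQFnn t]
  intro t htT1 k
  have hVt : V t = 0 := by
    have hle : V t ≤ V T1 := hantiB (Set.self_mem_Ici) htT1 htT1
    have := hVnn t
    linarith [hVT1 ▸ hle]
  have := (Finset.sum_eq_zero_iff_of_nonneg
    (fun k _ => mul_nonneg (hξpos k).le (sq_nonneg (X t k)))).mp hVt k (Finset.mem_univ k)
  rcases mul_eq_zero.mp this with h | h
  · exact absurd h (hξpos k).ne'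
  · exact pow_eq_zero_iff (by norm_num) |>.mp h
end

section
/- Suppose W is symmetric, the digraph of W is strongly connected, and it is structurally balanced with gauge g for the full node set. Then for every nominal prescribed-time trajectory X with parameters ρ1, ρ2 > 0 and prescribed time T1 > 0, one has X t k = g k · ((1/N) · ∑_j g j · X 0 j) for all t ≥ T1 and all nodes k (prescribed-time signed-average consensus within the preassigned time T1). -/
open Matrix

section Aux
open Matrix Finset Set Filter

lemma colsum {N : ℕ} (A : Fin N → Fin N → ℝ) (hs : ∀ k l, A k l = A l k) (z : Fin N → ℝ) :
    ∑ k, ((∑ l, A k l) * z k - ∑ l, A k l * z l) = 0 := by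
  rw [Finset.sum_sub_distrib, sub_eq_zero]
  calc ∑ k, (∑ l, A k l) * z k = ∑ k, ∑ l, A k l * z k := by
        simp [Finset.sum_mul]
    _ = ∑ l, ∑ k, A k l * z k := Finset.sum_comm
    _ = ∑ k, ∑ l, A k l * z l := by
        refine Finset.sum_congr rfl fun l _ => Finset.sum_congr rfl fun k _ => by rw [hs]

lemma quadform {N : ℕ} (A : Fin N → Fin N → ℝ) (hs : ∀ k l, A k l = A l k) (z : Fin N → ℝ) :
    2 * ∑ k, z k * ((∑ l, A k l) * z k - ∑ l, A k l * z l)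
      = ∑ k, ∑ l, A k l * (z k - z l)^2 := by
  have h1 : ∑ k, ∑ l, A k l * (z l * z l) = ∑ k, ∑ l, A k l * (z k * z k) := by
    calc ∑ k, ∑ l, A k l * (z l * z l) = ∑ l, ∑ k, A k l * (z l * z l) := Finset.sum_comm
      _ = ∑ k, ∑ l, A k l * (z k * z k) := by
          refine Finset.sum_congr rfl fun l _ => Finset.sum_congr rfl fun k _ => by rw [hs]
  have h2 : ∀ k, z k * ((∑ l, A k l) * z k - ∑ l, A k l * z l)
      = ∑ l, (A k l * (z k * z k) - A k l * (z k * z l)) := by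
    intro k
    rw [Finset.sum_sub_distrib]
    have e1 : ∑ l, A k l * (z k * z k) = (∑ l, A k l) * (z k * z k) :=
      (Finset.sum_mul _ _ _).symm
    have e2 : ∑ l, A k l * (z k * z l) = z k * ∑ l, A k l * z l := by
      rw [Finset.mul_sum]; exact Finset.sum_congr rfl fun l _ => by ring
    rw [e1, e2]; ring
  have h3 : ∀ k l, A k l * (z k - z l)^2
      = (A k l * (z k * z k) - A k l * (z k * z l))
        + (A k l * (z l * z l) - A k l * (z k * z l)) := fun k l => by ring
  have h4 : ∑ k, ∑ l, A k l * (z k * z l) = ∑ k, ∑ l, A k l * (z k * z l) := rfl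
  have h5 : (∑ k : Fin N, ∑ l, A k l * (z l * z l)) - ∑ k, ∑ l, A k l * (z k * z l)
      = ∑ k, ∑ l, (A k l * (z l * z l) - A k l * (z k * z l)) := by
    simp [Finset.sum_sub_distrib]
  calc 2 * ∑ k, z k * ((∑ l, A k l) * z k - ∑ l, A k l * z l)
      = 2 * ∑ k, ∑ l, (A k l * (z k * z k) - A k l * (z k * z l)) := by
        rw [Finset.sum_congr rfl fun k _ => h2 k]
    _ = (∑ k, ∑ l, (A k l * (z k * z k) - A k l * (z k * z l)))
        + (∑ k, ∑ l, (A k l * (z l * z l) - A k l * (z k * z l))) := by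
        rw [← h5]
        simp only [Finset.sum_sub_distrib, h1]; ring
    _ = ∑ k, ∑ l, A k l * (z k - z l)^2 := by
        rw [← Finset.sum_add_distrib]
        refine Finset.sum_congr rfl fun k _ => ?_
        rw [← Finset.sum_add_distrib]
        exact (Finset.sum_congr rfl fun l _ => (h3 k l).symm)

lemma deriv_sum_eq {N : ℕ} (A : Fin N → Fin N → ℝ) (hs : ∀ k l, A k l = A l k)
    (z : Fin N → ℝ) (c r : ℝ) :
    ∑ k, 2 * (z k - c) * (r * ((∑ l, A k l) * z k - ∑ l, A k l * z l))
      = r * ∑ k, ∑ l, A k l * (z k - z l)^2 := by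
  have expand : ∀ k, 2 * (z k - c) * (r * ((∑ l, A k l) * z k - ∑ l, A k l * z l))
      = r * (2 * (z k * ((∑ l, A k l) * z k - ∑ l, A k l * z l)))
        - (2 * r * c) * ((∑ l, A k l) * z k - ∑ l, A k l * z l) := fun k => by ring
  rw [Finset.sum_congr rfl fun k _ => expand k, Finset.sum_sub_distrib,
    ← Finset.mul_sum, ← Finset.mul_sum, ← Finset.mul_sum, colsum A hs z,
    ← quadform A hs z]
  ring

lemma fiedler {N : ℕ} (hN : 2 ≤ N) (A : Fin N → Fin N → ℝ) (h0 : ∀ k l, 0 ≤ A k l)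
    (hconn : ∀ z : Fin N → ℝ, (∀ k l, A k l ≠ 0 → z k = z l) → ∀ i j, z i = z j) :
    ∃ lam : ℝ, 0 < lam ∧ ∀ z : Fin N → ℝ, (∑ k, z k = 0) →
      lam * ∑ k, (z k)^2 ≤ ∑ k, ∑ l, A k l * (z k - z l)^2 := by
  classical
  set Q : (Fin N → ℝ) → ℝ := fun z => ∑ k, ∑ l, A k l * (z k - z l)^2 with hQ
  have hQc : Continuous Q := by
    apply continuous_finset_sum
    intro k _
    apply continuous_finset_sum
    intro l _
    exact continuous_const.mul (((continuous_apply k).sub (continuous_apply l)).pow 2)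
  have hQnn : ∀ z, 0 ≤ Q z := fun z =>
    Finset.sum_nonneg fun k _ => Finset.sum_nonneg fun l _ =>
      mul_nonneg (h0 k l) (sq_nonneg _)
  set S : Set (Fin N → ℝ) := {z | (∑ k, z k = 0) ∧ ∑ k, (z k)^2 = 1} with hS
  have hc1 : Continuous fun z : Fin N → ℝ => ∑ k, z k :=
    continuous_finset_sum _ fun k _ => continuous_apply k
  have hc2 : Continuous fun z : Fin N → ℝ => ∑ k, (z k)^2 :=
    continuous_finset_sum _ fun k _ => (continuous_apply k).pow 2
  have hclosed : IsClosed S :=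
    ((isClosed_singleton.preimage hc1).inter (isClosed_singleton.preimage hc2))
  have hbdd : Bornology.IsBounded S := by
    apply (Metric.isBounded_closedBall (x := (0 : Fin N → ℝ)) (r := 1)).subset
    intro z hz
    simp only [Metric.mem_closedBall, dist_zero_right]
    rw [pi_norm_le_iff_of_nonneg zero_le_one]
    intro i
    rw [Real.norm_eq_abs]
    have hle : (z i)^2 ≤ 1 := by
      calc (z i)^2 ≤ ∑ k, (z k)^2 :=
            Finset.single_le_sum (fun k _ => sq_nonneg (z k)) (Finset.mem_univ i)
        _ = 1 := hz.2
    nlinarith [abs_nonneg (z i), sq_abs (z i)]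
  have hcompact : IsCompact S := Metric.isCompact_of_isClosed_isBounded hclosed hbdd
  -- nonempty
  have h01 : (⟨0, by omega⟩ : Fin N) ≠ ⟨1, by omega⟩ := by
    intro h; simpa using congrArg Fin.val h
  set i0 : Fin N := ⟨0, by omega⟩
  set i1 : Fin N := ⟨1, by omega⟩
  set r : ℝ := Real.sqrt (1/2) with hr
  have hr2 : r^2 = 1/2 := Real.sq_sqrt (by norm_num)
  set z0 : Fin N → ℝ := fun k => (Pi.single i0 r : Fin N → ℝ) k - (Pi.single i1 r : Fin N → ℝ) k with hz0
  have hz0S : z0 ∈ S := by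
    constructor
    · simp [z0, Finset.sum_sub_distrib, Finset.sum_pi_single']
    · have : ∀ k, (z0 k)^2 = (Pi.single i0 (r^2) : Fin N → ℝ) k + (Pi.single i1 (r^2) : Fin N → ℝ) k := by
        intro k
        by_cases h1 : k = i0
        · subst h1; simp [z0, Pi.single_eq_of_ne h01.symm, Ne.symm h01]
        · by_cases h2 : k = i1
          · subst h2; simp [z0, Pi.single_eq_of_ne h01, h01]
          · simp [z0, Pi.single_eq_of_ne h1, Pi.single_eq_of_ne h2]
      rw [Finset.sum_congr rfl fun k _ => this k, Finset.sum_add_distrib,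
          Finset.sum_pi_single', Finset.sum_pi_single']
      rw [hr2]; norm_num
  have hSne : S.Nonempty := ⟨z0, hz0S⟩
  obtain ⟨w0, hw0S, hw0min⟩ := hcompact.exists_isMinOn hSne hQc.continuousOn
  refine ⟨Q w0, ?_, ?_⟩
  · rcases lt_or_eq_of_le (hQnn w0) with h | h
    · exact h
    exfalso
    have hterm : ∀ k l, A k l * (w0 k - w0 l)^2 = 0 := by
      have h' := h.symm
      rw [hQ] at h'
      have hk := (Finset.sum_eq_zero_iff_of_nonneg (fun k _ =>
        Finset.sum_nonneg fun l _ => mul_nonneg (h0 k l) (sq_nonneg _))).mp h'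
      intro k l
      have := (Finset.sum_eq_zero_iff_of_nonneg (fun l _ =>
        mul_nonneg (h0 k l) (sq_nonneg _))).mp (hk k (Finset.mem_univ k))
      exact this l (Finset.mem_univ l)
    have heq : ∀ i j, w0 i = w0 j := by
      apply hconn
      intro k l hA
      have := hterm k l
      rcases mul_eq_zero.mp this with h | h
      · exact absurd h hA
      · have := pow_eq_zero_iff (n := 2) (by norm_num) |>.mp h
        linarith [sub_eq_zero.mp this]
    have hsum := hw0S.1
    have : ∀ k, w0 k = w0 i0 := fun k => heq k i0
    rw [Finset.sum_congr rfl fun k _ => this k, Finset.sum_const, Finset.card_univ,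
      Fintype.card_fin, nsmul_eq_mul] at hsum
    have hN0 : (N : ℝ) ≠ 0 := by positivity
    have hw00 : w0 i0 = 0 := by
      rcases mul_eq_zero.mp hsum with h | h
      · exact absurd h hN0
      · exact h
    have := hw0S.2
    rw [Finset.sum_congr rfl fun k _ => by rw [heq k i0, hw00]] at this
    simp at this
  · intro z hzsum
    rcases eq_or_lt_of_le (Finset.sum_nonneg fun k _ => sq_nonneg (z k)) with h | h
    · rw [← h, mul_zero]; exact hQnn z
    set s := ∑ k, (z k)^2 with hs
    set rr := Real.sqrt s with hrr
    have hrrpos : 0 < rr := Real.sqrt_pos.mpr h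
    have hrr2 : rr^2 = s := Real.sq_sqrt h.le
    set w : Fin N → ℝ := fun k => z k / rr with hw
    have hzw : ∀ k, z k = rr * w k := fun k => by
      rw [hw]; field_simp
    have hwS : w ∈ S := by
      constructor
      · rw [hw]; simp only [← Finset.sum_div, hzsum, zero_div]
      · have : ∀ k, (w k)^2 = (z k)^2 / s := by
          intro k; rw [hw, div_pow, hrr2]
        rw [Finset.sum_congr rfl fun k _ => this k, ← Finset.sum_div, ← hs,
          div_self h.ne']
    have hmin := hw0min hwS
    have hQz : Q z = s * Q w := by
      rw [hQ]
      rw [Finset.mul_sum]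
      refine Finset.sum_congr rfl fun k _ => ?_
      rw [Finset.mul_sum]
      refine Finset.sum_congr rfl fun l _ => ?_
      rw [hzw k, hzw l, ← hrr2]; ring
    calc Q w0 * ∑ k, (z k)^2 = Q w0 * s := by rw [hs]
      _ ≤ Q w * s := by
          apply mul_le_mul_of_nonneg_right hmin h.le
      _ = s * Q w := mul_comm _ _
      _ = Q z := hQz.symm

lemma gronwall_vanish (T1 p : ℝ) (hT1 : 0 < T1) (hp : 0 < p) (E E' : ℝ → ℝ)
    (hcont : Continuous E) (hnn : ∀ t, 0 ≤ E t)
    (hd : ∀ t ∈ Set.Ioo 0 T1, HasDerivAt E (E' t) t)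
    (hb : ∀ t ∈ Set.Ioo 0 T1, E' t ≤ -(p / (T1 - t)) * E t) :
    E T1 = 0 := by
  set φ : ℝ → ℝ := fun t => (T1 - t) ^ (-p) with hφ
  have hφpos : ∀ t < T1, 0 < φ t := fun t ht =>
    Real.rpow_pos_of_pos (by linarith) _
  have hφd : ∀ t < T1, HasDerivAt φ (p * (T1 - t) ^ (-p - 1)) t := by
    intro t ht
    have h1 : HasDerivAt (fun s : ℝ => T1 - s) (-1) t := (hasDerivAt_id t).const_sub T1
    have h2 := Real.hasDerivAt_rpow_const (x := T1 - t) (p := -p)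
      (Or.inl (by intro h; linarith [sub_eq_zero.mp h] : T1 - t ≠ 0))
    have := h2.comp t h1
    rw [show p * (T1 - t) ^ (-p - 1) = -p * (T1 - t) ^ (-p - 1) * -1 by ring]
    exact this
  set H : ℝ → ℝ := fun t => E t * φ t with hH
  have hφcont : ContinuousOn φ (Set.Iio T1) := by
    intro t ht
    have : ContinuousAt φ t :=
      (Real.continuousAt_rpow_const _ _ (Or.inl (by simp only [Set.mem_Iio] at ht; intro h; linarith [sub_eq_zero.mp h]))).comp
        ((continuous_const.sub continuous_id).continuousAt)
    exact this.continuousWithinAt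
  -- H is antitone on Ico 0 T1
  have hmono : AntitoneOn H (Set.Ico 0 T1) := by
    apply antitoneOn_of_deriv_nonpos (convex_Ico 0 T1)
    · exact (hcont.continuousOn.mul (hφcont.mono fun x hx => hx.2)).congr fun x _ => rfl
    · intro t ht
      rw [interior_Ico] at ht
      exact ((hd t ht).mul (hφd t ht.2)).differentiableAt.differentiableWithinAt
    · intro t ht
      rw [interior_Ico] at ht
      have hdH := (hd t ht).mul (hφd t ht.2)
      show deriv (E * φ) t ≤ 0
      rw [hdH.deriv]
      have h1 : E' t * φ t ≤ -(p / (T1 - t)) * E t * φ t := by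
        have := mul_le_mul_of_nonneg_right (hb t ht) (hφpos t ht.2).le
        linarith
      have h2 : (T1 - t) ^ (-p - 1) = φ t / (T1 - t) := by
        rw [hφ]
        have hpos : (0:ℝ) < T1 - t := by linarith [ht.2]
        rw [show -p - 1 = -p + -1 by ring, Real.rpow_add hpos, Real.rpow_neg_one,
          div_eq_mul_inv]
      have hpos : (0:ℝ) < T1 - t := by linarith [ht.2]
      have h3 : E t * (p * (T1 - t) ^ (-p - 1)) = p / (T1 - t) * E t * φ t := by
        rw [h2]; field_simp
      calc E' t * φ t + E t * (p * (T1 - t) ^ (-p - 1))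
          ≤ -(p / (T1 - t)) * E t * φ t + p / (T1 - t) * E t * φ t := by
            rw [h3] at *; linarith
        _ = 0 := by ring
  -- bound on Ico
  have hbound : ∀ t ∈ Set.Ico 0 T1, E t ≤ (E 0 * T1 ^ (-p)) * (T1 - t) ^ p := by
    intro t ht
    have h0 : (0:ℝ) ∈ Set.Ico 0 T1 := ⟨le_refl 0, hT1⟩
    have := hmono h0 ht ht.1
    rw [hH] at this
    simp only [sub_zero] at this
    -- this : E t * φ t ≤ E 0 * T1 ^ (-p)
    have hpos : (0:ℝ) < T1 - t := by linarith [ht.2]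
    have hφt : φ t = ((T1 - t) ^ p)⁻¹ := by
      simp only [hφ]; rw [Real.rpow_neg hpos.le]
    have hφ0 : φ 0 = T1 ^ (-p) := by simp only [hφ]; rw [sub_zero]
    rw [hφ0] at this
    have hppos : (0:ℝ) < (T1 - t) ^ p := Real.rpow_pos_of_pos hpos p
    rw [hφt] at this
    calc E t = E t * ((T1 - t) ^ p)⁻¹ * (T1 - t) ^ p := by field_simp
      _ ≤ (E 0 * T1 ^ (-p)) * (T1 - t) ^ p :=
          mul_le_mul_of_nonneg_right this hppos.le
  -- limit
  have hlim : Filter.Tendsto (fun t => (E 0 * T1 ^ (-p)) * (T1 - t) ^ p)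
      (nhdsWithin T1 (Set.Iio T1)) (nhds 0) := by
    have h1 : Filter.Tendsto (fun t : ℝ => T1 - t) (nhds T1) (nhds 0) := by
      have h := ((continuous_const (y := T1)).sub continuous_id).tendsto T1
      convert h using 2
      · rfl
      · exact (sub_self T1).symm
    have h2 : ContinuousAt (fun x : ℝ => x ^ p) 0 :=
      Real.continuousAt_rpow_const 0 p (Or.inr hp.le)
    have h3 : Filter.Tendsto (fun t : ℝ => (T1 - t) ^ p) (nhds T1) (nhds 0) := by
      have := h2.tendsto.comp h1
      rwa [Real.zero_rpow hp.ne'] at this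
    have := h3.const_mul (E 0 * T1 ^ (-p))
    rw [mul_zero] at this
    exact this.mono_left nhdsWithin_le_nhds
  have hET : Filter.Tendsto E (nhdsWithin T1 (Set.Iio T1)) (nhds (E T1)) :=
    (hcont.tendsto T1).mono_left nhdsWithin_le_nhds
  have hev : ∀ᶠ t in nhdsWithin T1 (Set.Iio T1),
      E t ≤ (E 0 * T1 ^ (-p)) * (T1 - t) ^ p := by
    filter_upwards [Ioo_mem_nhdsLT_of_mem (Set.mem_Ioc.mpr ⟨hT1, le_refl T1⟩)] with t ht
    exact hbound t ⟨ht.1.le, ht.2⟩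
  have : E T1 ≤ 0 := le_of_tendsto_of_tendsto hET hlim hev
  exact le_antisymm this (hnn T1)

end Aux

theorem prescribed_time_signed_average_consensus
    {N : ℕ} (hN : 2 ≤ N) (W : Matrix (Fin N) (Fin N) ℝ)
    (hdiag : ∀ k, W k k = 0)
    (hsymm : W.IsSymm)
    (hSC : StronglyConnected W)
    (g : Fin N → ℝ) (hg : IsGauge W Set.univ g)
    (κ ρ1 ρ2 T1 : ℝ) (hκ : 2 < κ) (hρ1 : 0 < ρ1) (hρ2 : 0 < ρ2) (hT1 : 0 < T1)
    (X : ℝ → Fin N → ℝ) (hX : NominalTraj W κ ρ1 ρ2 T1 X) :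
    ∀ t : ℝ, T1 ≤ t → ∀ k,
      X t k = g k * ((1 / (N : ℝ)) * ∑ j, g j * X 0 j) := by
  classical
  obtain ⟨hcX, hdX⟩ := hX
  have hg1 : ∀ k, g k * g k = 1 := by
    intro k; rcases hg.1 k (Set.mem_univ k) with h | h <;> rw [h] <;> norm_num
  have hgauge : ∀ k l, g k * W k l * g l = |W k l| := fun k l =>
    hg.2 k (Set.mem_univ k) l (Set.mem_univ l)
  have habs : ∀ k l : Fin N, |W k l| = |W l k| := fun k l => by
    rw [hsymm.apply k l]
  have hgW : ∀ k l, g k * W k l = |W k l| * g l := fun k l => by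
    linear_combination g l * hgauge k l - g k * W k l * hg1 l
  have hmul : ∀ (x : Fin N → ℝ) k,
      (sLap W).mulVec x k = (∑ l, |W k l|) * x k - ∑ l, W k l * x l := by
    intro x k
    simp [sLap, Matrix.sub_mulVec, Matrix.mulVec_diagonal, Matrix.mulVec,
      dotProduct, Pi.sub_apply, Matrix.diagonal_apply, sub_mul, ite_mul,
      Finset.sum_sub_distrib, Finset.sum_ite_eq]
  have hGL : ∀ (x : Fin N → ℝ) k, g k * (sLap W).mulVec x k
      = (∑ l, |W k l|) * (g k * x k) - ∑ l, |W k l| * (g l * x l) := by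
    intro x k
    rw [hmul, mul_sub, Finset.mul_sum]
    congr 1
    · ring
    · exact Finset.sum_congr rfl fun l _ => by rw [← mul_assoc, hgW k l]; ring
  set a : ℝ → ℝ := fun t => ρ1 + ρ2 * gain κ T1 t with ha
  have haeq : ∀ t, a t = ρ1 + ρ2 * gain κ T1 t := fun t => rfl
  have hgain_nonneg : ∀ t, 0 ≤ gain κ T1 t := by
    intro t; rw [gain]; split
    · next h => exact div_nonneg (by linarith) (by linarith [h.2])
    · exact le_refl 0
  have hapos : ∀ t, 0 < a t := fun t =>
    add_pos_of_pos_of_nonneg hρ1 (mul_nonneg hρ2.le (hgain_nonneg t))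
  set c : ℝ := (1 / (N : ℝ)) * ∑ j, g j * X 0 j with hc
  set E : ℝ → ℝ := fun t => ∑ k, (g k * X t k - c)^2 with hE
  set Qf : ℝ → ℝ := fun t => ∑ k, ∑ l, |W k l| * (g k * X t k - g l * X t l)^2 with hQf
  set Ed : ℝ → ℝ := fun t => -(a t) * Qf t with hEdd
  have hQfnn : ∀ t, 0 ≤ Qf t := fun t =>
    Finset.sum_nonneg fun k _ => Finset.sum_nonneg fun l _ =>
      mul_nonneg (abs_nonneg _) (sq_nonneg _)
  have hEnn : ∀ t, 0 ≤ E t := fun t => Finset.sum_nonneg fun k _ => sq_nonneg _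
  have hEcont : Continuous E := by
    apply continuous_finset_sum
    intro k _
    exact ((continuous_const.mul ((continuous_apply k).comp hcX)).sub
      continuous_const).pow 2
  have hsmul : ∀ (t : ℝ) k, g k * ((-(a t)) • (sLap W).mulVec (X t)) k
      = (-(a t)) * ((∑ l, |W k l|) * (g k * X t k) - ∑ l, |W k l| * (g l * X t l)) := by
    intro t k
    rw [Pi.smul_apply, smul_eq_mul, ← mul_assoc, mul_comm (g k), mul_assoc, hGL]
  have hderivE : ∀ t, 0 ≤ t → t ≠ T1 → HasDerivAt E (Ed t) t := by
    intro t ht hne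
    have hX' := hdX t ht hne
    rw [show -(ρ1 + ρ2 * gain κ T1 t) = -(a t) from by rw [haeq]] at hX'
    have hXk : ∀ k, HasDerivAt (fun s => X s k)
        (((-(a t)) • (sLap W).mulVec (X t)) k) t := fun k => hasDerivAt_pi.mp hX' k
    have hterm : ∀ k, HasDerivAt (fun s => (g k * X s k - c)^2)
        (2 * (g k * X t k - c) * (g k * ((-(a t)) • (sLap W).mulVec (X t)) k)) t := by
      intro k
      have h1 := (((hXk k).const_mul (g k)).sub_const c).pow 2
      have heq : (2:ℝ) * (g k * X t k - c) * (g k * ((-(a t)) • (sLap W).mulVec (X t)) k)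
          = (↑(2:ℕ) : ℝ) * (g k * X t k - c)^(2-1) * (g k * ((-(a t)) • (sLap W).mulVec (X t)) k) := by
        norm_num
      rw [heq]; exact h1
    have hsum := HasDerivAt.sum (fun k (_ : k ∈ Finset.univ) => hterm k)
    have e1 : ∀ k, 2 * (g k * X t k - c) * (g k * ((-(a t)) • (sLap W).mulVec (X t)) k)
        = 2 * (g k * X t k - c) * ((-(a t)) * ((∑ l, |W k l|) * (g k * X t k)
            - ∑ l, |W k l| * (g l * X t l))) := fun k => by rw [hsmul t k]
    have veq : (∑ k, 2 * (g k * X t k - c) * (g k * ((-(a t)) • (sLap W).mulVec (X t)) k)) = Ed t := by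
      rw [Finset.sum_congr rfl fun k _ => e1 k,
        deriv_sum_eq (fun k l => |W k l|) habs (fun k => g k * X t k) c (-(a t))]
    rw [veq] at hsum
    rw [Finset.sum_fn] at hsum
    exact hsum
  -- mean conservation
  have hMd : ∀ t, 0 ≤ t → t ≠ T1 → HasDerivAt (fun s => ∑ j, g j * X s j) 0 t := by
    intro t ht hne
    have hX' := hdX t ht hne
    rw [show -(ρ1 + ρ2 * gain κ T1 t) = -(a t) from by rw [haeq]] at hX'
    have hXk : ∀ k, HasDerivAt (fun s => X s k)
        (((-(a t)) • (sLap W).mulVec (X t)) k) t := fun k => hasDerivAt_pi.mp hX' k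
    have hsum := HasDerivAt.sum (fun j (_ : j ∈ Finset.univ) => (hXk j).const_mul (g j))
    have e1 : ∀ j, g j * (((-(a t)) • (sLap W).mulVec (X t)) j)
        = (-(a t)) * ((∑ l, |W j l|) * (g j * X t j)
            - ∑ l, |W j l| * (g l * X t l)) := fun j => by rw [hsmul t j]
    have veq : (∑ j, g j * (((-(a t)) • (sLap W).mulVec (X t)) j)) = 0 := by
      rw [Finset.sum_congr rfl fun j _ => e1 j,
        ← Finset.mul_sum, colsum (fun k l => |W k l|) habs (fun k => g k * X t k), mul_zero]
    rw [veq] at hsum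
    rw [Finset.sum_fn] at hsum
    exact hsum
  have hM : ∀ t, 0 ≤ t → t < T1 → ∑ j, g j * X t j = ∑ j, g j * X 0 j := by
    intro t ht htl
    have hcontM : ContinuousOn (fun s => ∑ j, g j * X s j) (Set.Icc 0 t) := by
      apply Continuous.continuousOn
      exact continuous_finset_sum _ fun j _ =>
        continuous_const.mul ((continuous_apply j).comp hcX)
    have hkey := constant_of_has_deriv_right_zero hcontM (fun s hs =>
      (hMd s hs.1 (by intro h; rw [h] at hs; linarith [hs.2])).hasDerivWithinAt)
    exact hkey t (Set.mem_Icc.mpr ⟨ht, le_refl t⟩)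
  -- connectivity
  have hconn : ∀ z : Fin N → ℝ, (∀ k l, |W k l| ≠ 0 → z k = z l) → ∀ i j, z i = z j := by
    intro z hz i j
    have h := hSC i j
    induction h with
    | refl => rfl
    | tail _ hbc ih =>
        rename_i b cc _
        exact ih.trans (hz b cc (by rw [habs]; exact abs_ne_zero.mpr hbc))
  obtain ⟨lam, hlam, hfied⟩ := fiedler hN (fun k l => |W k l|)
    (fun k l => abs_nonneg _) hconn
  have hNne : (N : ℝ) ≠ 0 := Nat.cast_ne_zero.mpr (by omega)
  have hQE : ∀ t, 0 ≤ t → t < T1 → lam * E t ≤ Qf t := by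
    intro t ht htl
    have hz : ∑ k, (g k * X t k - c) = 0 := by
      rw [Finset.sum_sub_distrib, hM t ht htl, Finset.sum_const, Finset.card_univ,
        Fintype.card_fin, nsmul_eq_mul, hc]
      field_simp
      ring
    have hf := hfied (fun k => g k * X t k - c) hz
    calc lam * E t = lam * ∑ k, (g k * X t k - c)^2 := rfl
      _ ≤ ∑ k, ∑ l, |W k l| * ((g k * X t k - c) - (g l * X t l - c))^2 := hf
      _ = Qf t := by
          refine Finset.sum_congr rfl fun k _ => Finset.sum_congr rfl fun l _ => ?_
          rw [sub_sub_sub_cancel_right]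
  have hET1 : E T1 = 0 := by
    apply gronwall_vanish T1 (lam * ρ2 * κ) hT1 (by positivity) E Ed hEcont hEnn
    · intro t ht; exact hderivE t ht.1.le (ne_of_lt ht.2)
    · intro t ht
      have h1 : lam * E t ≤ Qf t := hQE t ht.1.le ht.2
      have hpos : (0:ℝ) < T1 - t := by linarith [ht.2]
      have hgaint : gain κ T1 t = κ / (T1 - t) := by
        rw [gain, if_pos ⟨ht.1.le, ht.2⟩]
      have haval : a t = ρ1 + ρ2 * (κ / (T1 - t)) := by rw [haeq, hgaint]
      have hge : lam * ρ2 * κ / (T1 - t) ≤ a t * lam := by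
        rw [haval, add_mul]
        have e : ρ2 * (κ / (T1 - t)) * lam = lam * ρ2 * κ / (T1 - t) := by ring
        nlinarith [mul_pos hρ1 hlam]
      have hc1 : Ed t = -(a t) * Qf t := rfl
      have hc2 : -(a t) * Qf t ≤ -(a t) * (lam * E t) := by
        nlinarith [mul_le_mul_of_nonneg_left h1 (hapos t).le]
      have hc3 : -(a t) * (lam * E t) ≤ -(lam * ρ2 * κ / (T1 - t)) * E t := by
        nlinarith [mul_le_mul_of_nonneg_right hge (hEnn t)]
      calc Ed t = -(a t) * Qf t := hc1
        _ ≤ -(a t) * (lam * E t) := hc2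
        _ ≤ -(lam * ρ2 * κ / (T1 - t)) * E t := hc3
  intro t htT k
  have hE0 : E t = 0 := by
    rcases eq_or_lt_of_le htT with h | h
    · rw [← h]; exact hET1
    · have hanti : AntitoneOn E (Set.Icc T1 t) := by
        apply antitoneOn_of_deriv_nonpos (convex_Icc T1 t) hEcont.continuousOn
        · intro s hs
          rw [interior_Icc] at hs
          exact (hderivE s (by linarith [hs.1]) (ne_of_gt hs.1)).differentiableAt.differentiableWithinAt
        · intro s hs
          rw [interior_Icc] at hs
          rw [(hderivE s (by linarith [hs.1]) (ne_of_gt hs.1)).deriv]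
          have h1 := hQfnn s
          have h2 := hapos s
          show -(a s) * Qf s ≤ 0
          nlinarith
      have hle := hanti (Set.left_mem_Icc.mpr htT) (Set.right_mem_Icc.mpr htT) htT
      linarith [hEnn t, hET1]
  have hsumz : ∑ j, (g j * X t j - c)^2 = 0 := hE0
  have hzero : (g k * X t k - c)^2 = 0 :=
    (Finset.sum_eq_zero_iff_of_nonneg (fun j _ => sq_nonneg _)).mp hsumz k (Finset.mem_univ k)
  have heqc : g k * X t k = c := by
    have := pow_eq_zero_iff (n := 2) (by norm_num) |>.mp hzero
    linarith [sub_eq_zero.mp this]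
  calc X t k = (g k * g k) * X t k := by rw [hg1 k]; ring
    _ = g k * (g k * X t k) := by ring
    _ = g k * c := by rw [heqc]
end

section
/- Suppose the digraph of W is quasi-strongly connected and the follower set F is nonempty. Let L_F be the principal submatrix of the signed Laplacian L obtained by restricting rows and columns to F. Then: (1) every eigenvalue (in ℂ) of the comparison matrix 𝓜(L_F) has positive real part, and in particular L_F is invertible; (2) there exists a diagonal matrix Ξ indexed by F with strictly positive diagonal entries such that Ξ·L_F + L_Fᵀ·Ξ is positive definite. -/
open Matrix

attribute [local instance] Classical.propDecidable

/-- Comparison matrix: diagonal `|B i i|`, off-diagonal `−|B i j|`. -/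
noncomputable def compMatrix {n : Type*} [DecidableEq n] (B : Matrix n n ℝ) : Matrix n n ℝ :=
  fun i j => if i = j then |B i j| else -|B i j|


section AuxSDD

open Finset

variable {n : Type*} [Fintype n] [DecidableEq n]

/-- Lévy–Desplanques: a strictly diagonally dominant matrix has nonzero determinant. -/
lemma det_ne_zero_of_sdd {K : Type*} [RCLike K] (A : Matrix n n K)
    (h : ∀ i, ∑ j ∈ univ.erase i, ‖A i j‖ < ‖A i i‖) : A.det ≠ 0 := by
  intro h0
  obtain ⟨v, hv0, hAv⟩ := (Matrix.exists_mulVec_eq_zero_iff).2 h0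
  obtain ⟨j0, hj0⟩ := Function.ne_iff.1 hv0
  have hj0' : v j0 ≠ 0 := by simpa using hj0
  obtain ⟨i, -, hi⟩ := Finset.exists_max_image univ (fun i => ‖v i‖) ⟨j0, mem_univ _⟩
  have hvi : 0 < ‖v i‖ := lt_of_lt_of_le (norm_pos_iff.2 hj0') (hi j0 (mem_univ _))
  have hrow : A i i * v i + ∑ j ∈ univ.erase i, A i j * v j = 0 := by
    rw [Finset.add_sum_erase univ (fun j => A i j * v j) (mem_univ i)]
    have := congrFun hAv i
    simpa [Matrix.mulVec, dotProduct] using this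
  have hsplit : A i i * v i = -∑ j ∈ univ.erase i, A i j * v j :=
    eq_neg_of_add_eq_zero_left hrow
  have hle : ‖A i i‖ * ‖v i‖ ≤ (∑ j ∈ univ.erase i, ‖A i j‖) * ‖v i‖ := by
    calc ‖A i i‖ * ‖v i‖ = ‖A i i * v i‖ := (norm_mul _ _).symm
    _ = ‖∑ j ∈ univ.erase i, A i j * v j‖ := by rw [hsplit, norm_neg]
    _ ≤ ∑ j ∈ univ.erase i, ‖A i j * v j‖ := norm_sum_le _ _
    _ ≤ ∑ j ∈ univ.erase i, ‖A i j‖ * ‖v i‖ := by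
        refine Finset.sum_le_sum fun j _ => ?_
        rw [norm_mul]
        exact mul_le_mul_of_nonneg_left (hi j (mem_univ _)) (norm_nonneg _)
    _ = (∑ j ∈ univ.erase i, ‖A i j‖) * ‖v i‖ := (Finset.sum_mul _ _ _).symm
  exact absurd (le_of_mul_le_mul_right hle hvi) (not_le.2 (h i))

/-- Weighted version: generalized strict diagonal dominance. -/
lemma det_ne_zero_of_wsdd {K : Type*} [RCLike K] (A : Matrix n n K) (x : n → ℝ)
    (hx : ∀ i, 0 < x i)
    (h : ∀ i, ∑ j ∈ univ.erase i, ‖A i j‖ * x j < ‖A i i‖ * x i) : A.det ≠ 0 := by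
  have hB : (A * Matrix.diagonal (fun j => (algebraMap ℝ K) (x j))).det ≠ 0 := by
    apply det_ne_zero_of_sdd
    intro i
    have hn : ∀ i j, ‖(A * Matrix.diagonal (fun j => (algebraMap ℝ K) (x j))) i j‖
        = ‖A i j‖ * x j := by
      intro i j
      rw [Matrix.mul_diagonal, norm_mul]
      congr 1
      rw [show (algebraMap ℝ K) (x j) = ((x j : ℝ) : K) from rfl]
      rw [RCLike.norm_ofReal, abs_of_pos (hx j)]
    simp only [hn]
    exact h i
  rw [Matrix.det_mul, Matrix.det_diagonal] at hB
  exact fun h0 => hB (by rw [h0, zero_mul])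

/-- Minimum principle: a generalized strictly diagonally dominant Z-matrix is
inverse-nonnegative. -/
lemma nonneg_of_mulVec_nonneg (M : Matrix n n ℝ) (x : n → ℝ)
    (hZ : ∀ i j, i ≠ j → M i j ≤ 0)
    (hx : ∀ i, 0 < x i)
    (h : ∀ i, ∑ j ∈ univ.erase i, |M i j| * x j < M i i * x i)
    (y : n → ℝ) (hy : ∀ i, 0 ≤ (M.mulVec y) i) : ∀ i, 0 ≤ y i := by
  rcases isEmpty_or_nonempty n with hne | hne
  · exact fun i => (IsEmpty.elim hne i)
  obtain ⟨i, -, hi⟩ := Finset.exists_min_image univ (fun i => y i / x i)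
    ⟨Classical.arbitrary n, mem_univ _⟩
  set t := y i / x i with ht
  have hyt : ∀ j, t * x j ≤ y j := fun j => by
    have := hi j (mem_univ _)
    calc t * x j ≤ (y j / x j) * x j := mul_le_mul_of_nonneg_right this (hx j).le
    _ = y j := div_mul_cancel₀ _ (hx j).ne'
  have hti : y i = t * x i := (div_mul_cancel₀ _ (hx i).ne').symm
  have htpos : 0 ≤ t := by
    by_contra hneg
    push_neg at hneg
    have hrow : (M.mulVec y) i = M i i * y i + ∑ j ∈ univ.erase i, M i j * y j := by
      rw [Matrix.mulVec, dotProduct]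
      exact (Finset.add_sum_erase univ (fun j => M i j * y j) (mem_univ i)).symm
    have hb : ∀ j ∈ univ.erase i, M i j * y j ≤ -(|M i j| * x j) * t := by
      intro j hj
      have hij : i ≠ j := (Finset.ne_of_mem_erase hj).symm
      have h1 : M i j = -|M i j| := by
        rw [abs_of_nonpos (hZ i j hij)]; ring
      have h2 : |M i j| * (t * x j) ≤ |M i j| * y j :=
        mul_le_mul_of_nonneg_left (hyt j) (abs_nonneg _)
      calc M i j * y j = -|M i j| * y j := by conv_lhs => rw [h1]
      _ ≤ -(|M i j| * x j) * t := by nlinarith [h2]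
    have hkey : (M.mulVec y) i ≤ t * (M i i * x i - ∑ j ∈ univ.erase i, |M i j| * x j) := by
      rw [hrow, hti]
      calc M i i * (t * x i) + ∑ j ∈ univ.erase i, M i j * y j
          ≤ M i i * (t * x i) + ∑ j ∈ univ.erase i, -(|M i j| * x j) * t :=
            add_le_add (le_refl _) (Finset.sum_le_sum hb)
      _ = t * (M i i * x i - ∑ j ∈ univ.erase i, |M i j| * x j) := by
            simp only [neg_mul]
            rw [Finset.sum_neg_distrib, ← Finset.sum_mul]
            ring
    have hneg2 : (M.mulVec y) i < 0 :=
      lt_of_le_of_lt hkey (mul_neg_of_neg_of_pos hneg (sub_pos.2 (h i)))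
    exact absurd (hy i) (not_le.2 hneg2)
  intro j
  exact le_trans (mul_nonneg htpos (hx j).le) (hyt j)

/-- A symmetric strictly diagonally dominant real matrix is positive definite. -/
lemma posDef_of_sdd (A : Matrix n n ℝ) (hsym : Aᵀ = A)
    (h : ∀ i, ∑ j ∈ univ.erase i, |A i j| < A i i) : A.PosDef := by
  have hherm : A.IsHermitian := by
    rw [Matrix.IsHermitian, Matrix.conjTranspose]
    convert hsym using 1
    ext i j
    simp [Matrix.map_apply]
  refine Matrix.PosDef.of_dotProduct_mulVec_pos hherm fun ⦃v⦄ hv => ?_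
  have expand : dotProduct (star v) (A *ᵥ v)
      = ∑ i, (A i i * v i ^ 2 + ∑ j ∈ univ.erase i, v i * A i j * v j) := by
    rw [dotProduct]
    refine Finset.sum_congr rfl fun i _ => ?_
    rw [show star v i = v i from rfl, Matrix.mulVec, dotProduct, Finset.mul_sum,
      ← Finset.add_sum_erase univ (fun j => v i * (A i j * v j)) (mem_univ i)]
    rw [Finset.sum_congr rfl (fun j _ => show v i * (A i j * v j) = v i * A i j * v j by ring)]
    ring_nf
  have hswap : ∑ i, ∑ j ∈ univ.erase i, |A i j| * (v j ^ 2 / 2)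
      = ∑ i, ∑ j ∈ univ.erase i, |A i j| * (v i ^ 2 / 2) := by
    rw [Finset.sum_comm' (s := univ) (t := fun i => univ.erase i)
      (t' := univ) (s' := fun j => univ.erase j)]
    · refine Finset.sum_congr rfl fun j _ => Finset.sum_congr rfl fun i hi => ?_
      have : |A j i| = |A i j| := by
        conv_lhs => rw [← hsym]
        rw [Matrix.transpose_apply]
      rw [this]
    · intro i j
      simp only [Finset.mem_univ, Finset.mem_erase, true_and, and_true, ne_eq]
      exact ⟨fun hh => Ne.symm hh, fun hh => Ne.symm hh⟩
  have hS : ∑ i, ∑ j ∈ univ.erase i, |A i j| * ((v i ^ 2 + v j ^ 2) / 2)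
      = ∑ i, (∑ j ∈ univ.erase i, |A i j|) * v i ^ 2 := by
    have e1 : ∀ i, ∑ j ∈ univ.erase i, |A i j| * ((v i ^ 2 + v j ^ 2) / 2)
        = ∑ j ∈ univ.erase i, |A i j| * (v i ^ 2 / 2)
          + ∑ j ∈ univ.erase i, |A i j| * (v j ^ 2 / 2) := by
      intro i
      rw [← Finset.sum_add_distrib]
      exact Finset.sum_congr rfl fun j _ => by ring
    rw [Finset.sum_congr rfl fun i _ => e1 i, Finset.sum_add_distrib, hswap,
      ← Finset.sum_add_distrib]
    refine Finset.sum_congr rfl fun i _ => ?_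
    rw [Finset.sum_mul, ← Finset.sum_add_distrib]
    exact Finset.sum_congr rfl fun j _ => by ring
  have hcross : ∀ i, -∑ j ∈ univ.erase i, |A i j| * ((v i ^ 2 + v j ^ 2) / 2)
      ≤ ∑ j ∈ univ.erase i, v i * A i j * v j := by
    intro i
    rw [← Finset.sum_neg_distrib]
    refine Finset.sum_le_sum fun j _ => ?_
    have h1 : |v i * A i j * v j| ≤ |A i j| * ((v i ^ 2 + v j ^ 2) / 2) := by
      rw [abs_mul, abs_mul]
      nlinarith [abs_nonneg (A i j), abs_nonneg (v i), abs_nonneg (v j),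
        sq_abs (v i), sq_abs (v j), sq_nonneg (|v i| - |v j|)]
    nlinarith [neg_abs_le (v i * A i j * v j)]
  have key : ∑ i, (A i i - ∑ j ∈ univ.erase i, |A i j|) * v i ^ 2
      ≤ dotProduct (star v) (A *ᵥ v) := by
    rw [expand]
    calc ∑ i, (A i i - ∑ j ∈ univ.erase i, |A i j|) * v i ^ 2
        = ∑ i, A i i * v i ^ 2
          - ∑ i, ∑ j ∈ univ.erase i, |A i j| * ((v i ^ 2 + v j ^ 2) / 2) := by
          rw [hS, ← Finset.sum_sub_distrib]
          exact Finset.sum_congr rfl fun i _ => by ring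
      _ ≤ ∑ i, (A i i * v i ^ 2 + ∑ j ∈ univ.erase i, v i * A i j * v j) := by
          rw [Finset.sum_add_distrib]
          have := Finset.sum_le_sum fun i (_ : i ∈ (univ : Finset n)) => hcross i
          rw [Finset.sum_neg_distrib] at this
          linarith
  have hpos : 0 < ∑ i, (A i i - ∑ j ∈ univ.erase i, |A i j|) * v i ^ 2 := by
    obtain ⟨i0, hi0⟩ := Function.ne_iff.1 hv
    have hi0' : v i0 ≠ 0 := by simpa using hi0
    refine Finset.sum_pos' (fun i _ => mul_nonneg (sub_nonneg.2 (h i).le) (sq_nonneg _))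
      ⟨i0, mem_univ _, ?_⟩
    exact mul_pos (sub_pos.2 (h i0)) (by positivity)
  exact lt_of_lt_of_le hpos key

end AuxSDD

/-- `chainN W n i`: within `n` steps along in-neighbours one can go from `i`
to a node having a leader in-neighbour. -/
def chainN {N : ℕ} (W : Matrix (Fin N) (Fin N) ℝ) : ℕ → Fin N → Prop
  | 0, i => ∃ l, IsLeader W l ∧ W i l ≠ 0
  | n+1, i => chainN W n i ∨ ∃ j, ¬ IsLeader W j ∧ W i j ≠ 0 ∧ chainN W n j

lemma chainN_exists {N : ℕ} {W : Matrix (Fin N) (Fin N) ℝ}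
    (hQS : QuasiStronglyConnected W) :
    ∀ i, ¬ IsLeader W i → ∃ n, chainN W n i := by
  obtain ⟨r, hr⟩ := hQS
  have hrl : IsLeader W r := fun j _ => hr j
  intro i hi
  have hri : Reaches W r i := hr i
  revert hi
  induction hri with
  | refl => exact fun hi => absurd hrl hi
  | @tail b c hrb hbc ih =>
    intro _
    by_cases hb : IsLeader W b
    · exact ⟨0, b, hb, hbc⟩
    · obtain ⟨n, hn⟩ := ih hb
      exact ⟨n + 1, Or.inr ⟨b, hb, hbc, hn⟩⟩

lemma chainN_exists_ne {N : ℕ} {W : Matrix (Fin N) (Fin N) ℝ} {n : ℕ} {i : Fin N}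
    (h : chainN W n i) : ∃ l, W i l ≠ 0 := by
  induction n with
  | zero => obtain ⟨l, _, hl⟩ := h; exact ⟨l, hl⟩
  | succ m ih =>
    rcases h with h | ⟨j, _, hj, _⟩
    · exact ih h
    · exact ⟨j, hj⟩

theorem follower_laplacian_H_matrix
    {N : ℕ} (hN : 2 ≤ N) (W : Matrix (Fin N) (Fin N) ℝ)
    (hdiag : ∀ k, W k k = 0)
    (hQS : QuasiStronglyConnected W)
    (hF : ∃ k, ¬ IsLeader W k) :
    (∀ z ∈ spectrum ℂ
        ((compMatrix ((sLap W).submatrix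
          (Subtype.val : {k : Fin N // ¬ IsLeader W k} → Fin N) Subtype.val)).map
          (algebraMap ℝ ℂ)),
      0 < z.re) ∧
    IsUnit ((sLap W).submatrix
      (Subtype.val : {k : Fin N // ¬ IsLeader W k} → Fin N) Subtype.val).det ∧
    ∃ ξ : {k : Fin N // ¬ IsLeader W k} → ℝ, (∀ i, 0 < ξ i) ∧
      (Matrix.diagonal ξ *
          (sLap W).submatrix (Subtype.val : {k : Fin N // ¬ IsLeader W k} → Fin N) Subtype.val +
        ((sLap W).submatrix
          (Subtype.val : {k : Fin N // ¬ IsLeader W k} → Fin N) Subtype.val)ᵀ *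
          Matrix.diagonal ξ).PosDef  := by
  classical
  set α := {k : Fin N // ¬ IsLeader W k} with hα
  haveI hne : Nonempty α := by obtain ⟨k, hk⟩ := hF; exact ⟨⟨k, hk⟩⟩
  set L' : Matrix α α ℝ := (sLap W).submatrix Subtype.val Subtype.val with hL'
  set M : Matrix α α ℝ := compMatrix L' with hM
  -- Entry computations
  have hL'd : ∀ i : α, L' i i = ∑ l, |W i.1 l| := by
    intro i
    show (sLap W) i.1 i.1 = _
    simp [sLap, Matrix.sub_apply, Matrix.diagonal_apply_eq, hdiag i.1]
  have hL'o : ∀ i j : α, i ≠ j → L' i j = -W i.1 j.1 := by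
    intro i j hij
    have hne1 : i.1 ≠ j.1 := fun h => hij (Subtype.ext h)
    show (sLap W) i.1 j.1 = _
    simp [sLap, Matrix.sub_apply, Matrix.diagonal_apply_ne _ hne1]
  have hMd : ∀ i : α, M i i = ∑ l, |W i.1 l| := by
    intro i
    show compMatrix L' i i = _
    rw [show compMatrix L' i i = |L' i i| from if_pos rfl]
    rw [hL'd i, abs_of_nonneg (Finset.sum_nonneg fun l _ => abs_nonneg _)]
  have hMo : ∀ i j : α, i ≠ j → M i j = -|W i.1 j.1| := by
    intro i j hij
    show compMatrix L' i j = _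
    rw [show compMatrix L' i j = -|L' i j| from if_neg hij]
    rw [hL'o i j hij, abs_neg]
  -- distances to a strictly dominant row
  have hex : ∀ i : α, ∃ n, chainN W n i.1 := fun i => chainN_exists hQS i.1 i.2
  set d : α → ℕ := fun i => Nat.find (hex i) with hd
  have hdspec : ∀ i : α, chainN W (d i) i.1 := fun i => Nat.find_spec (hex i)
  have hMiipos : ∀ i : α, 0 < ∑ l, |W i.1 l| := by
    intro i
    obtain ⟨l, hl⟩ := chainN_exists_ne (hdspec i)
    exact Finset.sum_pos' (fun l _ => abs_nonneg _) ⟨l, Finset.mem_univ _, abs_pos.2 hl⟩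
  have hRle : ∀ i : α, (∑ j ∈ Finset.univ.erase i, |W i.1 j.1|) ≤ ∑ l, |W i.1 l| := by
    intro i
    rw [← Finset.sum_image (f := fun l => |W i.1 l|)
      (g := fun j : α => j.1) (s := Finset.univ.erase i) (fun x _ y _ h => Subtype.ext h)]
    exact Finset.sum_le_sum_of_subset_of_nonneg (Finset.subset_univ _)
      (fun l _ _ => abs_nonneg _)
  have hRle0 : ∀ i : α, ∀ l₀ : Fin N, IsLeader W l₀ →
      (∑ j ∈ Finset.univ.erase i, |W i.1 j.1|) + |W i.1 l₀| ≤ ∑ l, |W i.1 l| := by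
    intro i l₀ hl₀
    have himg : l₀ ∉ (Finset.univ.erase i).image (fun j : α => j.1) := by
      intro hmem
      obtain ⟨j, -, hj⟩ := Finset.mem_image.1 hmem
      exact j.2 (by rw [show j.1 = l₀ from hj]; exact hl₀)
    rw [← Finset.sum_image (f := fun l => |W i.1 l|)
      (g := fun j : α => j.1) (s := Finset.univ.erase i) (fun x _ y _ h => Subtype.ext h)]
    have heq : (∑ l ∈ (Finset.univ.erase i).image (fun j : α => j.1), |W i.1 l|) + |W i.1 l₀|
        = ∑ l ∈ insert l₀ ((Finset.univ.erase i).image (fun j : α => j.1)), |W i.1 l| := by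
      rw [Finset.sum_insert himg]; ring
    rw [heq]
    exact Finset.sum_le_sum_of_subset_of_nonneg (Finset.subset_univ _)
      (fun l _ _ => abs_nonneg _)
  -- per-row threshold for the weighted diagonal dominance
  have hball : ∀ i : α, ∃ b : ℝ, 0 < b ∧ ∀ ε : ℝ, 0 < ε → ε < 1 → ε < b →
      ∑ j ∈ Finset.univ.erase i, |W i.1 j.1| * (1 - ε ^ (d j + 1))
        < (∑ l, |W i.1 l|) * (1 - ε ^ (d i + 1)) := by
    intro i
    rcases Nat.eq_zero_or_pos (d i) with h0 | hpos
    · have hch : chainN W 0 i.1 := h0 ▸ hdspec i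
      obtain ⟨l₀, hl₀, hW0⟩ := hch
      refine ⟨|W i.1 l₀| / (∑ l, |W i.1 l|), div_pos (abs_pos.2 hW0) (hMiipos i), ?_⟩
      intro ε hε0 hε1 hεb
      have hεM : ε * (∑ l, |W i.1 l|) < |W i.1 l₀| := (lt_div_iff₀ (hMiipos i)).1 hεb
      have hup : ∑ j ∈ Finset.univ.erase i, |W i.1 j.1| * (1 - ε ^ (d j + 1))
          ≤ ∑ j ∈ Finset.univ.erase i, |W i.1 j.1| := by
        refine Finset.sum_le_sum fun j _ => ?_
        have h1 : (1 : ℝ) - ε ^ (d j + 1) ≤ 1 := by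
          have := pow_pos hε0 (d j + 1); linarith
        exact mul_le_of_le_one_right (abs_nonneg _) h1
      have h2 := hRle0 i l₀ hl₀
      rw [h0, pow_one]
      nlinarith [hup]
    · obtain ⟨m, hm⟩ : ∃ m, d i = m + 1 := ⟨d i - 1, (Nat.succ_pred_eq_of_pos hpos).symm⟩
      have hch : chainN W (m + 1) i.1 := hm ▸ hdspec i
      have hmlt : m < d i := hm ▸ Nat.lt_succ_self m
      have hnot : ¬ chainN W m i.1 := Nat.find_min (hex i) hmlt
      rcases hch with hch | ⟨j, hjl, hWj, hcj⟩
      · exact absurd hch hnot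
      have hji : (⟨j, hjl⟩ : α) ≠ i := by
        intro h
        apply hWj
        rw [show j = i.1 from congrArg Subtype.val h, hdiag]
      have hdj : d ⟨j, hjl⟩ ≤ m := Nat.find_le hcj
      refine ⟨|W i.1 j| / (∑ l, |W i.1 l|), div_pos (abs_pos.2 hWj) (hMiipos i), ?_⟩
      intro ε hε0 hε1 hεb
      have hεM : ε * (∑ l, |W i.1 l|) < |W i.1 j| := (lt_div_iff₀ (hMiipos i)).1 hεb
      have hmem : (⟨j, hjl⟩ : α) ∈ Finset.univ.erase i :=
        Finset.mem_erase.2 ⟨hji, Finset.mem_univ _⟩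
      have hsplit := Finset.add_sum_erase (Finset.univ.erase i)
        (fun j' : α => |W i.1 j'.1| * (1 - ε ^ (d j' + 1))) hmem
      have hrest : ∑ j' ∈ (Finset.univ.erase i).erase ⟨j, hjl⟩,
            |W i.1 j'.1| * (1 - ε ^ (d j' + 1))
          ≤ ∑ j' ∈ (Finset.univ.erase i).erase ⟨j, hjl⟩, |W i.1 j'.1| := by
        refine Finset.sum_le_sum fun j' _ => ?_
        have h1 : (1 : ℝ) - ε ^ (d j' + 1) ≤ 1 := by
          have := pow_pos hε0 (d j' + 1); linarith
        exact mul_le_of_le_one_right (abs_nonneg _) h1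
      have hrest2 : ∑ j' ∈ (Finset.univ.erase i).erase ⟨j, hjl⟩, |W i.1 j'.1|
          = (∑ j' ∈ Finset.univ.erase i, |W i.1 j'.1|) - |W i.1 j| :=
        Finset.sum_erase_eq_sub hmem
      have hpow : ε ^ (m + 1) ≤ ε ^ (d ⟨j, hjl⟩ + 1) :=
        pow_le_pow_of_le_one hε0.le hε1.le (by omega)
      have hpmul : |W i.1 j| * ε ^ (m + 1) ≤ |W i.1 j| * ε ^ (d ⟨j, hjl⟩ + 1) :=
        mul_le_mul_of_nonneg_left hpow (abs_nonneg _)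
      have hfin := mul_lt_mul_of_pos_left hεM (pow_pos hε0 (m + 1))
      rw [hm, pow_succ]
      calc ∑ j' ∈ Finset.univ.erase i, |W i.1 j'.1| * (1 - ε ^ (d j' + 1))
          = |W i.1 j| * (1 - ε ^ (d ⟨j, hjl⟩ + 1))
            + ∑ j' ∈ (Finset.univ.erase i).erase ⟨j, hjl⟩,
                |W i.1 j'.1| * (1 - ε ^ (d j' + 1)) := hsplit.symm
        _ ≤ (∑ l, |W i.1 l|) - |W i.1 j| * ε ^ (m + 1) := by
            nlinarith [hRle i, hrest, hrest2, hpmul]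
        _ < (∑ l, |W i.1 l|) * (1 - ε ^ (m + 1) * ε) := by nlinarith [hfin]
  choose b hbpos hb using hball
  obtain ⟨i₀, -, hi₀⟩ := Finset.exists_min_image Finset.univ b
    ⟨Classical.arbitrary α, Finset.mem_univ _⟩
  set ε : ℝ := min (1/2) (b i₀ / 2) with hεdef
  have hε0 : 0 < ε := lt_min (by norm_num) (half_pos (hbpos i₀))
  have hε1 : ε < 1 := lt_of_le_of_lt (min_le_left _ _) (by norm_num)
  have hεb : ∀ i, ε < b i := fun i =>
    lt_of_le_of_lt (min_le_right _ _)
      (lt_of_lt_of_le (half_lt_self (hbpos i₀)) (hi₀ i (Finset.mem_univ _)))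
  set x : α → ℝ := fun j => 1 - ε ^ (d j + 1) with hxdef
  have hx : ∀ j, 0 < x j := fun j => by
    have : ε ^ (d j + 1) < 1 := pow_lt_one₀ hε0.le hε1 (Nat.succ_ne_zero _)
    simp only [hxdef]; linarith
  have hdom : ∀ i : α, ∑ j ∈ Finset.univ.erase i, |W i.1 j.1| * x j
      < (∑ l, |W i.1 l|) * x i := fun i => hb i ε hε0 hε1 (hεb i)
  refine ⟨?_, ?_, ?_⟩
  · -- all eigenvalues of the comparison matrix have positive real part
    intro z hz
    by_contra hre
    push_neg at hre
    rw [spectrum.mem_iff] at hz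
    apply hz
    rw [Matrix.isUnit_iff_isUnit_det]
    refine isUnit_iff_ne_zero.2 (det_ne_zero_of_wsdd _ x hx ?_)
    intro i
    set A : Matrix α α ℂ :=
      algebraMap ℂ (Matrix α α ℂ) z - M.map (algebraMap ℝ ℂ) with hA
    have hAo : ∀ j : α, j ≠ i → ‖A i j‖ = |W i.1 j.1| := by
      intro j hji
      have hij : i ≠ j := hji.symm
      rw [hA, Matrix.sub_apply, Matrix.algebraMap_matrix_apply, if_neg hij,
        Matrix.map_apply, hMo i j hij]
      rw [show (algebraMap ℝ ℂ) (-|W i.1 j.1|) = ((-|W i.1 j.1| : ℝ) : ℂ) from rfl]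
      rw [zero_sub, norm_neg, Complex.norm_real, Real.norm_eq_abs, abs_neg, abs_abs]
    have hAd : (∑ l, |W i.1 l|) ≤ ‖A i i‖ := by
      rw [hA, Matrix.sub_apply, Matrix.algebraMap_matrix_apply, if_pos rfl,
        Matrix.map_apply, hMd i, Algebra.algebraMap_self_apply]
      rw [show (algebraMap ℝ ℂ) (∑ l, |W i.1 l|) = ((∑ l, |W i.1 l| : ℝ) : ℂ) from rfl]
      rw [norm_sub_rev]
      have h1 : ((∑ l, |W i.1 l| : ℝ) : ℂ).re - z.re
          ≤ ‖((∑ l, |W i.1 l| : ℝ) : ℂ) - z‖ := by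
        calc ((∑ l, |W i.1 l| : ℝ) : ℂ).re - z.re
            = (((∑ l, |W i.1 l| : ℝ) : ℂ) - z).re := by simp [Complex.sub_re]
          _ ≤ ‖((∑ l, |W i.1 l| : ℝ) : ℂ) - z‖ := Complex.re_le_norm _
      have h2 : ((∑ l, |W i.1 l| : ℝ) : ℂ).re = ∑ l, |W i.1 l| := by simp
      linarith
    calc ∑ j ∈ Finset.univ.erase i, ‖A i j‖ * x j
        = ∑ j ∈ Finset.univ.erase i, |W i.1 j.1| * x j := by
          refine Finset.sum_congr rfl fun j hj => ?_
          rw [hAo j (Finset.ne_of_mem_erase hj)]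
      _ < (∑ l, |W i.1 l|) * x i := hdom i
      _ ≤ ‖A i i‖ * x i := mul_le_mul_of_nonneg_right hAd (hx i).le
  · -- the follower Laplacian is nonsingular
    refine isUnit_iff_ne_zero.2 (det_ne_zero_of_wsdd _ x hx ?_)
    intro i
    have hLo : ∀ j : α, j ≠ i → ‖L' i j‖ = |W i.1 j.1| := by
      intro j hji
      rw [Real.norm_eq_abs, hL'o i j hji.symm, abs_neg]
    have hLd : ‖L' i i‖ = ∑ l, |W i.1 l| := by
      rw [Real.norm_eq_abs, hL'd i,
        abs_of_nonneg (Finset.sum_nonneg fun l _ => abs_nonneg _)]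
    calc ∑ j ∈ Finset.univ.erase i, ‖L' i j‖ * x j
        = ∑ j ∈ Finset.univ.erase i, |W i.1 j.1| * x j := by
          refine Finset.sum_congr rfl fun j hj => ?_
          rw [hLo j (Finset.ne_of_mem_erase hj)]
      _ < (∑ l, |W i.1 l|) * x i := hdom i
      _ = ‖L' i i‖ * x i := by rw [hLd]
  · -- the diagonal Lyapunov solution
    have hdomM : ∀ i : α, ∑ j ∈ Finset.univ.erase i, |M i j| * x j < M i i * x i := by
      intro i
      rw [hMd i]
      calc ∑ j ∈ Finset.univ.erase i, |M i j| * x j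
          = ∑ j ∈ Finset.univ.erase i, |W i.1 j.1| * x j := by
            refine Finset.sum_congr rfl fun j hj => ?_
            rw [hMo i j (Finset.ne_of_mem_erase hj).symm, abs_neg, abs_abs]
        _ < _ := hdom i
    have hMdet : IsUnit M.det := by
      refine isUnit_iff_ne_zero.2 (det_ne_zero_of_wsdd _ x hx ?_)
      intro i
      have h1 : ∑ j ∈ Finset.univ.erase i, ‖M i j‖ * x j
          = ∑ j ∈ Finset.univ.erase i, |M i j| * x j :=
        Finset.sum_congr rfl fun j hj => by rw [Real.norm_eq_abs]
      rw [h1, Real.norm_eq_abs, abs_of_nonneg (by rw [hMd i]; exact (hMiipos i).le)]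
      exact hdomM i
    have hZ : ∀ i j : α, i ≠ j → M i j ≤ 0 := fun i j hij => by
      rw [hMo i j hij]; exact neg_nonpos.2 (abs_nonneg _)
    have hMl : M⁻¹ * M = 1 := Matrix.nonsing_inv_mul M hMdet
    have hMr : M * M⁻¹ = 1 := Matrix.mul_nonsing_inv M hMdet
    have hMinv_nonneg : ∀ c j : α, 0 ≤ M⁻¹ j c := by
      intro c
      refine nonneg_of_mulVec_nonneg M x hZ hx hdomM (fun j => M⁻¹ j c) ?_
      intro k
      have he : M.mulVec (fun j => M⁻¹ j c) k = (M * M⁻¹) k c := by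
        rw [Matrix.mulVec, dotProduct, Matrix.mul_apply]
      rw [he, hMr, Matrix.one_apply]
      split <;> norm_num
    set ξ : α → ℝ := fun i => ∑ j, M⁻¹ j i with hξdef
    have hξpos : ∀ i, 0 < ξ i := by
      intro i
      refine Finset.sum_pos' (fun j _ => hMinv_nonneg i j) ?_
      by_contra hno
      push_neg at hno
      have hzero : ∀ j : α, M⁻¹ j i = 0 :=
        fun j => le_antisymm (hno j (Finset.mem_univ _)) (hMinv_nonneg i j)
      have h1 : (M * M⁻¹) i i = 1 := by rw [hMr, Matrix.one_apply_eq]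
      rw [Matrix.mul_apply] at h1
      simp [hzero] at h1
    have hξ1 : ∀ i : α, ∑ j, M j i * ξ j = 1 := by
      intro i
      have h1 : ∑ j, M j i * ξ j = ∑ j, ∑ k, M⁻¹ k j * M j i := by
        refine Finset.sum_congr rfl fun j _ => ?_
        rw [show ξ j = ∑ k, M⁻¹ k j from rfl, Finset.mul_sum]
        exact Finset.sum_congr rfl fun k _ => mul_comm _ _
      rw [h1, Finset.sum_comm]
      rw [Finset.sum_congr rfl fun k (_ : k ∈ Finset.univ) =>
        (Matrix.mul_apply (M := M⁻¹) (N := M) (i := k) (k := i)).symm]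
      rw [hMl]
      simp [Matrix.one_apply]
      rw [Finset.sum_eq_single i (fun b _ hb => if_neg hb) (fun h => absurd (Finset.mem_univ i) h), if_pos rfl]
    have hcol : ∀ i : α, ∑ j ∈ Finset.univ.erase i, ξ j * |W j.1 i.1|
        = (∑ l, |W i.1 l|) * ξ i - 1 := by
      intro i
      have h1 := hξ1 i
      rw [← Finset.add_sum_erase Finset.univ (fun j => M j i * ξ j) (Finset.mem_univ i)] at h1
      have h2 : ∀ j ∈ Finset.univ.erase i, M j i * ξ j = -(ξ j * |W j.1 i.1|) := by
        intro j hj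
        rw [hMo j i (Finset.ne_of_mem_erase hj)]
        ring
      rw [Finset.sum_congr rfl h2, Finset.sum_neg_distrib, hMd i] at h1
      linarith
    refine ⟨ξ, hξpos, ?_⟩
    set S : Matrix α α ℝ := Matrix.diagonal ξ * L' + L'ᵀ * Matrix.diagonal ξ with hSdef
    have hSentry : ∀ i j : α, S i j = ξ i * L' i j + L' j i * ξ j := by
      intro i j
      rw [hSdef, Matrix.add_apply, Matrix.diagonal_mul, Matrix.mul_diagonal,
        Matrix.transpose_apply]
    have hsym : Sᵀ = S := by
      ext i j
      rw [Matrix.transpose_apply, hSentry j i, hSentry i j]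
      ring
    have hSdd : ∀ i : α, ∑ j ∈ Finset.univ.erase i, |S i j| < S i i := by
      intro i
      have hSd : S i i = 2 * (ξ i * (∑ l, |W i.1 l|)) := by
        rw [hSentry i i, hL'd i]; ring
      have hSb : ∀ j ∈ Finset.univ.erase i, |S i j| ≤ ξ i * |W i.1 j.1| + ξ j * |W j.1 i.1| := by
        intro j hj
        have hji : j ≠ i := Finset.ne_of_mem_erase hj
        rw [hSentry i j, hL'o i j hji.symm, hL'o j i hji]
        calc |ξ i * -W i.1 j.1 + -W j.1 i.1 * ξ j|
            ≤ |ξ i * -W i.1 j.1| + |(-W j.1 i.1) * ξ j| := abs_add_le _ _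
          _ = ξ i * |W i.1 j.1| + ξ j * |W j.1 i.1| := by
              rw [abs_mul, abs_mul, abs_neg, abs_neg, abs_of_pos (hξpos i), abs_of_pos (hξpos j)]
              ring
      calc ∑ j ∈ Finset.univ.erase i, |S i j|
          ≤ ∑ j ∈ Finset.univ.erase i, (ξ i * |W i.1 j.1| + ξ j * |W j.1 i.1|) :=
            Finset.sum_le_sum hSb
        _ = ξ i * (∑ j ∈ Finset.univ.erase i, |W i.1 j.1|)
            + ∑ j ∈ Finset.univ.erase i, ξ j * |W j.1 i.1| := by
            rw [Finset.sum_add_distrib, Finset.mul_sum]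
        _ ≤ ξ i * (∑ l, |W i.1 l|) + ((∑ l, |W i.1 l|) * ξ i - 1) := by
            have h3 := mul_le_mul_of_nonneg_left (hRle i) (hξpos i).le
            have h4 := hcol i
            linarith
        _ < S i i := by rw [hSd]; linarith
    exact posDef_of_sdd S hsym hSdd
end
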